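/- arXiv:1405.1636 — 9 statements merged into one kernel-verified Lean document; each statement's English description precedes it below -/
import Mathlib

section
/- For n ≥ 3, the number of independent sets of the cycle graph C_n equals the Lucas number L_n, where L_n = F_{n+1} + F_{n-1}. -/
open List Finset

def nadj (a b : Bool) : Prop := ¬(a = true ∧ b = true)

instance : DecidableRel nadj := fun a b => by unfold nadj; infer_instance

def goodF : ℕ → Bool → Bool → Finset (List Bool)
  | 0, h, m => if h = m then {[h]} else ∅
  | n+1, false, m => ((goodF n false m) ∪ (goodF n true m)).image (List.cons false)
  | n+1, true, m => (goodF n false m).image (List.cons true)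

lemma mem_goodF : ∀ (n : ℕ) (h m : Bool) (l : List Bool),
    l ∈ goodF n h m ↔
      l.length = n + 1 ∧ l.Chain' nadj ∧ l.head? = some h ∧ l.getLast? = some m := by
  intro n
  induction n with
  | zero =>
    intro h m l
    constructor
    · intro hl
      by_cases hm : h = m
      · simp only [goodF, if_pos hm] at hl
        simp at hl
        subst hl
        simp [nadj, hm, List.Chain']
      · simp [goodF, hm] at hl
    · rintro ⟨hlen, hc, hh, hm'⟩
      match l, hlen with
      | [a], _ =>
        simp at hh hm'
        subst hh
        rw [hm'] at *
        simp [goodF]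
  | succ n ih =>
    intro h m l
    cases l with
    | nil => cases h <;> simp [goodF]
    | cons b t =>
      cases t with
      | nil =>
        have hne : ∀ h' : Bool, [] ∉ goodF n h' m := by
          intro h' hmem
          have := (ih h' m []).mp hmem
          simp at this
        cases h <;> cases b <;> simp [goodF, hne]
      | cons c t' =>
        cases h <;> cases b <;> cases c <;>
          simp [goodF, ih, List.Chain', List.isChain_cons_cons, nadj, List.getLast?_cons_cons]

lemma head_goodF {n : ℕ} {h m : Bool} {l : List Bool} (hl : l ∈ goodF n h m) :
    l.head? = some h := ((mem_goodF n h m l).mp hl).2.2.1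

lemma cons_inj (b : Bool) : Function.Injective (List.cons b) := fun x y hxy => by
  simpa using hxy

lemma card_goodF_false (n : ℕ) (m : Bool) :
    (goodF (n+1) false m).card = (goodF n false m).card + (goodF n true m).card := by
  rw [show goodF (n+1) false m = ((goodF n false m) ∪ (goodF n true m)).image (List.cons false)
      from rfl,
    Finset.card_image_of_injective _ (cons_inj false),
    Finset.card_union_of_disjoint]
  rw [Finset.disjoint_left]
  intro l h1 h2
  have := head_goodF h1
  have := head_goodF h2
  simp_all

lemma card_goodF_true (n : ℕ) (m : Bool) :
    (goodF (n+1) true m).card = (goodF n false m).card := by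
  rw [show goodF (n+1) true m = (goodF n false m).image (List.cons true) from rfl,
    Finset.card_image_of_injective _ (cons_inj true)]

lemma card_ff : ∀ n, (goodF n false false).card = Nat.fib (n+1) ∧
    (goodF n true false).card = Nat.fib n := by
  intro n
  induction n with
  | zero => constructor <;> simp [goodF]
  | succ n ih =>
    refine ⟨?_, ?_⟩
    · rw [card_goodF_false, ih.1, ih.2, Nat.fib_add_two, Nat.add_comm]
    · rw [card_goodF_true, ih.1]

lemma card_ft : ∀ n, (goodF n false true).card = Nat.fib n := by
  have key : ∀ n, (goodF n false true).card = Nat.fib n ∧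
      (goodF (n+1) false true).card = Nat.fib (n+1) := by
    intro n
    induction n with
    | zero =>
      constructor
      · simp [goodF]
      · rw [card_goodF_false]
        simp [goodF]
    | succ n ih =>
      refine ⟨ih.2, ?_⟩
      rw [card_goodF_false, card_goodF_true, ih.2, ih.1, Nat.fib_add_two, Nat.add_comm]
  exact fun n => (key n).1

def cyc (n : ℕ) : Finset (List Bool) :=
  goodF n false false ∪ goodF n false true ∪ goodF n true false

lemma card_cyc (n : ℕ) : (cyc n).card = Nat.fib (n+2) + Nat.fib n := by
  have hd : ∀ {n₁ : ℕ} {h₁ m₁ h₂ m₂ : Bool}, (h₁ ≠ h₂ ∨ m₁ ≠ m₂) →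
      Disjoint (goodF n₁ h₁ m₁) (goodF n₁ h₂ m₂) := by
    intro n₁ h₁ m₁ h₂ m₂ hne
    rw [Finset.disjoint_left]
    intro l hl1 hl2
    have e1 := (mem_goodF _ _ _ _).mp hl1
    have e2 := (mem_goodF _ _ _ _).mp hl2
    rcases hne with hne | hne
    · exact hne (by have := e1.2.2.1.symm.trans e2.2.2.1; simpa using this)
    · exact hne (by have := e1.2.2.2.symm.trans e2.2.2.2; simpa using this)
  rw [cyc, Finset.card_union_of_disjoint, Finset.card_union_of_disjoint]
  · rw [(card_ff n).1, (card_ff n).2, card_ft n]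
    have := Nat.fib_add_two (n := n)
    omega
  · exact hd (Or.inr (by simp))
  · rw [Finset.disjoint_union_left]
    exact ⟨hd (Or.inl (by simp)), hd (Or.inl (by simp))⟩

lemma mem_cyc (n : ℕ) (l : List Bool) :
    l ∈ cyc n ↔ l.length = n + 1 ∧ l.Chain' nadj ∧
      ¬(l.head? = some true ∧ l.getLast? = some true) := by
  simp only [cyc, Finset.mem_union, mem_goodF]
  constructor
  · rintro ((⟨h1, h2, h3, h4⟩ | ⟨h1, h2, h3, h4⟩) | ⟨h1, h2, h3, h4⟩) <;>
      exact ⟨h1, h2, by rw [h3, h4]; simp⟩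
  · rintro ⟨h1, h2, h3⟩
    have hne : l ≠ [] := by intro h; subst h; simp at h1
    obtain ⟨b, hb⟩ : ∃ b, l.head? = some b := ⟨l.head hne, List.head?_eq_head hne⟩
    obtain ⟨c, hc⟩ : ∃ c, l.getLast? = some c := ⟨l.getLast hne, List.getLast?_eq_getLast hne⟩
    cases b <;> cases c <;> simp_all

lemma head?_ofFn {n : ℕ} (f : Fin (n+1) → Bool) : (List.ofFn f).head? = some (f 0) := by
  simp [List.ofFn_succ]

lemma getLast?_ofFn {n : ℕ} (f : Fin (n+1) → Bool) :
    (List.ofFn f).getLast? = some (f ⟨n, Nat.lt_succ_self n⟩) := by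
  rw [List.getLast?_eq_getElem?, List.getElem?_ofFn]
  simp [List.ofFnNthVal]

/-- For `n ≥ 3`, the number of independent sets of the cycle graph `C_n`
equals the Lucas number `L_n = F_{n+1} + F_{n-1}`. -/
theorem cycle_indep_count (n : ℕ) (hn : 3 ≤ n) :
    ((Finset.univ : Finset (Fin n)).powerset.filter
      (fun s => ∀ i ∈ s, ∀ j ∈ s, (i.val + 1) % n = j.val → False)).card
      = Nat.fib (n + 1) + Nat.fib (n - 1) := by
  obtain ⟨k, rfl⟩ : ∃ k, n = k + 3 := ⟨n - 3, by omega⟩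
  rw [Finset.powerset_univ]
  have hcard :
      ((Finset.univ : Finset (Finset (Fin (k+3)))).filter
        (fun s => ∀ i ∈ s, ∀ j ∈ s, (i.val + 1) % (k+3) = j.val → False)).card
      = (cyc (k+2)).card := by
    apply Finset.card_bij
      (fun s _ => List.ofFn (fun i : Fin (k+3) => decide (i ∈ s)))
    · -- maps into cyc
      intro s hs
      rw [Finset.mem_filter] at hs
      have hP := hs.2
      rw [mem_cyc]
      refine ⟨by simp, ?_, ?_⟩
      · rw [show List.Chain' _ _ ↔ _ from List.isChain_iff_getElem]
        intro i hi
        simp only [List.length_ofFn] at hi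
        intro ⟨ha, hb⟩
        rw [List.getElem_ofFn] at ha hb
        simp only [decide_eq_true_eq] at ha hb
        refine hP _ ha _ hb ?_
        simp only [Fin.cast]
        have : i + 1 < k + 3 := by omega
        simp [Nat.mod_eq_of_lt this]
      · rw [show ((k:ℕ)+3) = (k+2)+1 from rfl] at *
        rw [head?_ofFn, getLast?_ofFn]
        intro ⟨ha, hb⟩
        simp only [Option.some_inj, decide_eq_true_eq] at ha hb
        refine hP _ hb _ ha ?_
        simp
    · -- injective
      intro s₁ h₁ s₂ h₂ heq
      have := List.ofFn_injective heq
      ext i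
      have := congrFun this i
      simpa using this
    · -- surjective
      intro l hl
      rw [mem_cyc] at hl
      obtain ⟨hlen, hch, hht⟩ := hl
      have hlen' : l.length = k + 3 := by omega
      refine ⟨Finset.univ.filter (fun i : Fin (k+3) =>
        l.get ⟨i.val, by rw [hlen']; exact i.2⟩ = true), ?_, ?_⟩
      · rw [Finset.mem_filter]
        refine ⟨Finset.mem_univ _, ?_⟩
        intro i hi j hj heq
        rw [Finset.mem_filter] at hi hj
        replace hi := hi.2
        replace hj := hj.2
        by_cases hc : i.val + 1 < k + 3
        · have hj' : j.val = i.val + 1 := by rw [← heq, Nat.mod_eq_of_lt hc]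
          rw [show List.Chain' nadj l ↔ _ from List.isChain_iff_getElem] at hch
          refine hch i.val (by omega) ?_
          simp only [List.get_eq_getElem] at hi hj
          constructor
          · convert hi using 3
          · convert hj using 3
            omega
        · have hiv : i.val = k + 2 := by omega
          have hjv : j.val = 0 := by
            rw [← heq, show i.val + 1 = k + 3 from by omega]
            simp
          apply hht
          constructor
          · rw [List.head?_eq_head (by intro h; simp [h] at hlen')]
            rw [show l.head _ = l.get ⟨0, by omega⟩ from by
              rw [List.get_eq_getElem, List.head_eq_getElem]]
            convert congrArg some hj using 3
            exact Fin.ext hjv.symm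
          · rw [List.getLast?_eq_getLast (l := l) (by intro h; simp [h] at hlen')]
            rw [show l.getLast _ = l.get ⟨l.length - 1, by omega⟩ from by
              rw [List.get_eq_getElem, List.getLast_eq_getElem]]
            have : l.length - 1 = i.val := by omega
            simp_rw [this]
            convert congrArg some hi using 3
      · apply List.ext_get (by simp [hlen'])
        intro m hm₁ hm₂
        rw [List.get_ofFn]
        simp
  rw [hcard, card_cyc]
  rfl
end

section
/- The number of compositions of n all of whose internal parts are greater than 1 (i.e. compositions (α_1,...,α_ℓ) with α_i > 1 for all 1 < i < ℓ) equals the Fibonacci number F_{n+1}. -/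
open Finset

/-- All parts except the last are `> 1`. -/
private def Qp (l : List ℕ) : Prop := ∀ i, i + 1 < l.length → 1 < l.getD i 0

/-- All internal parts are `> 1`. -/
private def Pp (l : List ℕ) : Prop := ∀ i, 0 < i → i + 1 < l.length → 1 < l.getD i 0

/-- The lists of blocks of compositions of `n`. -/
private noncomputable def comps (n : ℕ) : Finset (List ℕ) :=
  Finset.univ.image (fun c : Composition n => c.blocks)

private lemma mem_comps {n : ℕ} {l : List ℕ} :
    l ∈ comps n ↔ (∀ x ∈ l, 0 < x) ∧ l.sum = n := by
  constructor
  · rintro h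
    simp only [comps, Finset.mem_image, Finset.mem_univ, true_and] at h
    obtain ⟨c, rfl⟩ := h
    exact ⟨fun x hx => c.blocks_pos hx, c.blocks_sum⟩
  · rintro ⟨h1, h2⟩
    simp only [comps, Finset.mem_image, Finset.mem_univ, true_and]
    exact ⟨⟨l, fun {i} hi => h1 i hi, h2⟩, rfl⟩

private noncomputable def Bs (m : ℕ) : Finset (List ℕ) :=
  @Finset.filter _ (fun l => Qp l) (Classical.decPred _) (comps m)

private noncomputable def As (n : ℕ) : Finset (List ℕ) :=
  @Finset.filter _ (fun l => Pp l) (Classical.decPred _) (comps n)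

private lemma P_cons {a : ℕ} {t : List ℕ} : Pp (a :: t) ↔ Qp t := by
  constructor
  · intro h i hi
    have := h (i + 1) (Nat.succ_pos _) (by simpa using Nat.succ_lt_succ hi)
    simpa using this
  · intro h i hi hi'
    obtain ⟨j, rfl⟩ := Nat.exists_eq_add_of_lt hi
    simp only [List.length_cons] at hi'
    have := h j (by omega)
    simpa [Nat.zero_add] using this

private lemma Q_cons {a : ℕ} {t : List ℕ} :
    Qp (a :: t) ↔ (t = [] ∨ (1 < a ∧ Qp t)) := by
  rcases t with _ | ⟨b, t'⟩
  · simp [Qp]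
  · constructor
    · intro h
      refine Or.inr ⟨?_, ?_⟩
      · have := h 0 (by simp)
        simpa using this
      · intro i hi
        have := h (i + 1) (by simpa using Nat.succ_lt_succ hi)
        simpa using this
    · rintro (h | ⟨ha, hq⟩)
      · exact absurd h (by simp)
      · intro i hi
        rcases i with _ | j
        · simpa using ha
        · simp only [List.length_cons] at hi
          have := hq j (by simpa using Nat.lt_of_succ_lt_succ hi)
          simpa using this

private lemma Bs_zero : Bs 0 = {[]} := by
  ext l
  simp only [Bs, Finset.mem_filter, mem_comps, Finset.mem_singleton]
  constructor
  · rintro ⟨⟨hpos, hsum⟩, -⟩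
    rcases l with _ | ⟨a, t⟩
    · rfl
    · exfalso
      have := hpos a (by simp)
      simp only [List.sum_cons] at hsum
      omega
  · rintro rfl
    refine ⟨⟨by simp, rfl⟩, ?_⟩
    intro i hi
    simp at hi

private lemma cons_inj_s5 (a : ℕ) : Function.Injective (fun l : List ℕ => a :: l) :=
  fun _ _ h => by simpa using h

private lemma fib_sum_Ico (k : ℕ) :
    ∑ j ∈ Finset.Ico 1 k, Nat.fib j = ∑ j ∈ Finset.range k, Nat.fib j := by
  rcases Nat.eq_zero_or_pos k with rfl | hk
  · simp
  · rw [Finset.range_eq_Ico,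
      ← Finset.sum_Ico_consecutive (fun j => Nat.fib j) (Nat.zero_le 1) hk]
    have : Finset.Ico 0 1 = ({0} : Finset ℕ) := by decide
    simp [this]

private lemma Bs_eq (m : ℕ) (hm : 1 ≤ m) :
    Bs m = insert [m]
      ((Finset.Ico 1 (m - 1)).biUnion fun j => (Bs j).image (fun l => (m - j) :: l)) := by
  ext l
  simp only [Bs, Finset.mem_filter, mem_comps, Finset.mem_insert, Finset.mem_biUnion,
    Finset.mem_image, Finset.mem_Ico]
  constructor
  · rintro ⟨⟨hpos, hsum⟩, hq⟩
    rcases l with _ | ⟨a, t⟩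
    · exfalso; simp at hsum; omega
    rcases eq_or_ne t [] with rfl | htne
    · left
      simp only [List.sum_cons, List.sum_nil, add_zero] at hsum
      rw [hsum]
    · right
      obtain ⟨ha, hqt⟩ : 1 < a ∧ Qp t := by
        rcases Q_cons.mp hq with ht | h
        · exact absurd ht htne
        · exact h
      have hts : t.sum = m - a := by
        simp only [List.sum_cons] at hsum; omega
      have ha' : a ≤ m := by
        simp only [List.sum_cons] at hsum; omega
      have htpos : 0 < t.sum := by
        rcases t with _ | ⟨b, t'⟩
        · exact absurd rfl htne
        · have := hpos b (by simp); simp only [List.sum_cons]; omega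
      have hcast : m - t.sum = a := by
        simp only [List.sum_cons] at hsum; omega
      exact ⟨t.sum, ⟨by omega, by omega⟩, t,
        ⟨⟨⟨fun x hx => hpos x (by simp [hx]), rfl⟩, hqt⟩, by rw [hcast]⟩⟩
  · rintro (rfl | ⟨j, ⟨hj1, hj2⟩, t, ⟨⟨hpos, hsum⟩, hq⟩, rfl⟩)
    · refine ⟨⟨by intro x hx; simp at hx; omega, by simp⟩, ?_⟩
      intro i hi; simp at hi
    · have hmj : 1 < m - j := by omega
      refine ⟨⟨?_, ?_⟩, ?_⟩
      · intro x hx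
        rcases List.mem_cons.mp hx with rfl | hx'
        · omega
        · exact hpos x hx'
      · simp only [List.sum_cons, hsum]; omega
      · exact Q_cons.mpr (Or.inr ⟨hmj, hq⟩)

private lemma sum_pos_of_mem_Bs {j : ℕ} (hj : 1 ≤ j) {l : List ℕ} (hl : l ∈ Bs j) :
    l ≠ [] := by
  simp only [Bs, Finset.mem_filter, mem_comps] at hl
  rintro rfl
  have h0 : (List.sum ([] : List ℕ)) = j := hl.1.2
  simp only [List.sum_nil] at h0
  omega

private lemma Bs_card (m : ℕ) (hm : 1 ≤ m) :
    (Bs m).card = 1 + ∑ j ∈ Finset.Ico 1 (m - 1), (Bs j).card := by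
  rw [Bs_eq m hm]
  rw [Finset.card_insert_of_notMem, Finset.card_biUnion]
  · rw [Nat.add_comm]
    congr 1
    exact Finset.sum_congr rfl fun j _ => Finset.card_image_of_injective _ (cons_inj_s5 _)
  · intro j1 hj1 j2 hj2 hne
    simp only [Finset.mem_coe, Finset.mem_Ico] at hj1 hj2
    rw [Function.onFun, Finset.disjoint_left]
    rintro l hl1 hl2
    simp only [Finset.mem_image] at hl1 hl2
    obtain ⟨t1, ht1, rfl⟩ := hl1
    obtain ⟨t2, ht2, heq⟩ := hl2
    simp only [Bs, Finset.mem_filter, mem_comps] at ht1 ht2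
    have h1 : t1.sum = j1 := ht1.1.2
    have h2 : t2.sum = j2 := ht2.1.2
    injection heq with _ ht
    subst ht
    omega
  · rw [Finset.mem_biUnion]
    rintro ⟨j, hj, hl⟩
    simp only [Finset.mem_image] at hl
    obtain ⟨t, ht, heq⟩ := hl
    simp only [Finset.mem_Ico] at hj
    have htne := sum_pos_of_mem_Bs hj.1 ht
    injection heq with _ ht'
    exact htne ht'

private lemma Bs_card_fib : ∀ m, 1 ≤ m → (Bs m).card = Nat.fib m := by
  intro m
  induction m using Nat.strong_induction_on with
  | _ m ih =>
    intro hm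
    rw [Bs_card m hm]
    have hsum : ∑ j ∈ Finset.Ico 1 (m - 1), (Bs j).card
        = ∑ j ∈ Finset.Ico 1 (m - 1), Nat.fib j := by
      refine Finset.sum_congr rfl fun j hj => ?_
      simp only [Finset.mem_Ico] at hj
      exact ih j (by omega) hj.1
    rw [hsum]
    rw [fib_sum_Ico]
    have := Nat.fib_succ_eq_succ_sum (m - 1)
    have hm1 : m - 1 + 1 = m := by omega
    rw [hm1] at this
    omega

private lemma As_eq (n : ℕ) (hn : 1 ≤ n) :
    As n = (Finset.range n).biUnion fun j => (Bs j).image (fun l => (n - j) :: l) := by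
  ext l
  simp only [As, Bs, Finset.mem_filter, mem_comps, Finset.mem_biUnion, Finset.mem_image,
    Finset.mem_range]
  constructor
  · rintro ⟨⟨hpos, hsum⟩, hp⟩
    rcases l with _ | ⟨a, t⟩
    · exfalso; simp at hsum; omega
    have ha : 0 < a := hpos a (by simp)
    have hts : t.sum < n := by
      simp only [List.sum_cons] at hsum; omega
    have hcast : n - t.sum = a := by simp only [List.sum_cons] at hsum; omega
    exact ⟨t.sum, hts, t, ⟨⟨fun x hx => hpos x (by simp [hx]), rfl⟩, P_cons.mp hp⟩,
      by rw [hcast]⟩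
  · rintro ⟨j, hj, t, ⟨⟨hpos, hsum⟩, hq⟩, rfl⟩
    refine ⟨⟨?_, ?_⟩, P_cons.mpr hq⟩
    · intro x hx
      rcases List.mem_cons.mp hx with rfl | hx'
      · omega
      · exact hpos x hx'
    · simp only [List.sum_cons, hsum]; omega

private lemma As_card (n : ℕ) : (As n).card = Nat.fib (n + 1) := by
  rcases Nat.eq_zero_or_pos n with rfl | hn
  · have : As 0 = {[]} := by
      ext l
      simp only [As, Finset.mem_filter, mem_comps, Finset.mem_singleton]
      constructor
      · rintro ⟨⟨hpos, hsum⟩, -⟩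
        rcases l with _ | ⟨a, t⟩
        · rfl
        · exfalso
          have := hpos a (by simp)
          simp only [List.sum_cons] at hsum
          omega
      · rintro rfl
        exact ⟨⟨by simp, rfl⟩, fun i hi hi' => by simp at hi'⟩
    rw [this]; simp
  · rw [As_eq n hn, Finset.card_biUnion]
    · have : ∀ j ∈ Finset.range n, ((Bs j).image (fun l => (n - j) :: l)).card = (Bs j).card :=
        fun j _ => Finset.card_image_of_injective _ (cons_inj_s5 _)
      rw [Finset.sum_congr rfl this]
      have hsplit : Finset.range n = insert 0 (Finset.Ico 1 n) := by
        ext x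
        simp only [Finset.mem_range, Finset.mem_insert, Finset.mem_Ico]
        omega
      rw [hsplit, Finset.sum_insert (by simp)]
      rw [Bs_zero]
      have : ∑ j ∈ Finset.Ico 1 n, (Bs j).card = ∑ j ∈ Finset.Ico 1 n, Nat.fib j := by
        refine Finset.sum_congr rfl fun j hj => ?_
        simp only [Finset.mem_Ico] at hj
        exact Bs_card_fib j hj.1
      rw [this]
      rw [fib_sum_Ico]
      have := Nat.fib_succ_eq_succ_sum n
      simp only [Finset.card_singleton]
      omega
    · intro j1 hj1 j2 hj2 hne
      simp only [Finset.mem_coe, Finset.mem_range] at hj1 hj2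
      rw [Function.onFun, Finset.disjoint_left]
      rintro l hl1 hl2
      simp only [Finset.mem_image] at hl1 hl2
      obtain ⟨t1, ht1, rfl⟩ := hl1
      obtain ⟨t2, ht2, heq⟩ := hl2
      simp only [Bs, Finset.mem_filter, mem_comps] at ht1 ht2
      have h1 : t1.sum = j1 := ht1.1.2
      have h2 : t2.sum = j2 := ht2.1.2
      injection heq with _ ht
      subst ht
      omega

/-- The number of compositions of `n` all of whose internal parts are greater
than `1` equals the Fibonacci number `F_{n+1}`. -/
theorem count_compositions_internal_gt_one (n : ℕ) :
    Nat.card {c : Composition n //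
      ∀ i, 0 < i → i + 1 < c.length → 1 < c.blocks.getD i 0} = Nat.fib (n + 1) := by
  have e : {c : Composition n //
      ∀ i, 0 < i → i + 1 < c.length → 1 < c.blocks.getD i 0} ≃ (As n : Finset (List ℕ)) := by
    refine ⟨fun c => ⟨c.1.blocks, ?_⟩, fun l => ⟨⟨l.1, ?_, ?_⟩, ?_⟩, ?_, ?_⟩
    · simp only [As, Finset.mem_filter, mem_comps]
      exact ⟨⟨fun x hx => c.1.blocks_pos hx, c.1.blocks_sum⟩, fun i hi hi' =>
        c.2 i hi (by simpa [Composition.length] using hi')⟩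
    · have := l.2
      simp only [As, Finset.mem_filter, mem_comps] at this
      exact this.1.1
    · have := l.2
      simp only [As, Finset.mem_filter, mem_comps] at this
      exact this.1.2
    · have := l.2
      simp only [As, Finset.mem_filter, mem_comps] at this
      exact fun i hi hi' => this.2 i hi (by simpa [Composition.length] using hi')
    · rintro ⟨⟨b, hb1, hb2⟩, hc⟩
      rfl
    · rintro ⟨l, hl⟩
      rfl
  rw [Nat.card_congr e, Nat.card_eq_finsetCard, As_card]
end

section
/- For the path graph P_n with vertices 1,...,n, letting X be the set of odd vertices and Y the set of even vertices, one has F_{n+2} = Σ_{I ⊆ X independent} 2^{|Y \ N(I)|}, where N(I) is the set of vertices adjacent to some vertex of I. -/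
open Finset

def indepSets (n : ℕ) : Finset (Finset ℕ) :=
  (Finset.Icc 1 n).powerset.filter (fun S => ∀ v ∈ S, v + 1 ∉ S)

lemma indepSets_card (n : ℕ) : (indepSets n).card = Nat.fib (n + 2) := by
  induction n using Nat.strong_induction_on with
  | _ n ih =>
    match n with
    | 0 => decide
    | 1 => decide
    | (n+2) =>
      have h1 : ((indepSets (n+2)).filter (fun S => n+2 ∉ S)) = indepSets (n+1) := by
        ext S
        simp only [indepSets, mem_filter, mem_powerset]
        constructor
        · rintro ⟨⟨hsub, hind⟩, hnot⟩
          refine ⟨fun v hv => ?_, hind⟩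
          have h := hsub hv
          simp only [mem_Icc] at h ⊢
          refine ⟨h.1, ?_⟩
          by_contra hc
          have : v = n + 2 := by omega
          exact hnot (this ▸ hv)
        · rintro ⟨hsub, hind⟩
          refine ⟨⟨fun v hv => ?_, hind⟩, fun h => ?_⟩
          · have := hsub hv; simp only [mem_Icc] at this ⊢; omega
          · have := hsub h; simp only [mem_Icc] at this; omega
      have h2 : ((indepSets (n+2)).filter (fun S => n+2 ∈ S)).card = (indepSets n).card := by
        refine Finset.card_bij' (fun S _ => S.erase (n+2)) (fun T _ => insert (n+2) T)
          ?_ ?_ ?_ ?_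
        · intro S hS
          simp only [indepSets, mem_filter, mem_powerset] at hS ⊢
          obtain ⟨⟨hsub, hind⟩, hmem⟩ := hS
          constructor
          · intro v hv
            rw [mem_erase] at hv
            have h := hsub hv.2
            simp only [mem_Icc] at h ⊢
            refine ⟨h.1, ?_⟩
            have hne2 : v ≠ n + 2 := hv.1
            have hne1 : v ≠ n + 1 := by
              intro he
              exact hind v hv.2 (by rw [he]; exact hmem)
            omega
          · intro v hv
            exact fun hc => hind v (mem_of_mem_erase hv) (mem_of_mem_erase hc)
        · intro T hT
          simp only [indepSets, mem_filter, mem_powerset] at hT ⊢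
          obtain ⟨hsub, hind⟩ := hT
          refine ⟨⟨?_, ?_⟩, mem_insert_self _ _⟩
          · intro v hv
            rcases mem_insert.mp hv with h | h
            · simp only [h, mem_Icc]; omega
            · have := hsub h; simp only [mem_Icc] at this ⊢; omega
          · intro v hv hc
            rcases mem_insert.mp hv with h | h
            · rcases mem_insert.mp hc with h' | h'
              · omega
              · have := hsub h'; simp only [mem_Icc] at this; omega
            · rcases mem_insert.mp hc with h' | h'
              · have := hsub h; simp only [mem_Icc] at this; omega
              · exact hind v h h'
        · intro S hS
          simp only [mem_filter] at hS
          exact insert_erase hS.2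
        · intro T hT
          simp only [indepSets, mem_filter, mem_powerset] at hT
          apply erase_insert
          intro hc
          have := hT.1 hc
          simp only [mem_Icc] at this; omega
      have key : #(indepSets (n+2)) = #(indepSets n) + #(indepSets (n+1)) := by
        rw [← h2, ← h1]
        exact (Finset.card_filter_add_card_filter_not (fun S => n+2 ∈ S)).symm
      rw [key, ih (n+1) (by omega), ih n (by omega)]
      have hfib : Nat.fib (n+2+2) = Nat.fib (n+2) + Nat.fib (n+1+2) := Nat.fib_add_two
      omega


/-- For the path graph `P_n` with vertices `1,...,n`, with `X` the odd vertices and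
`Y` the even vertices, `F_{n+2} = Σ_{I ⊆ X} 2^{|Y \ N(I)|}`, where `N(I)` is the set
of vertices adjacent to some vertex of `I`. -/
theorem fib_as_sum_of_powers_of_two (n : ℕ) :
    Nat.fib (n + 2) =
      ∑ I ∈ ((Finset.Icc 1 n).filter (fun v => Odd v)).powerset,
        2 ^ (((Finset.Icc 1 n).filter (fun v => Even v)).filter
              (fun v => ¬(v + 1 ∈ I ∨ v - 1 ∈ I))).card := by
  rw [← indepSets_card]
  rw [Finset.card_eq_sum_card_fiberwise (f := fun S => S.filter (fun v => Odd v))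
    (t := ((Finset.Icc 1 n).filter (fun v => Odd v)).powerset)
    (fun S hS => by
      simp only [indepSets, mem_coe, mem_filter, mem_powerset] at hS ⊢
      intro v hv
      rw [mem_filter] at hv
      exact mem_filter.mpr ⟨hS.1 hv.1, hv.2⟩)]
  apply Finset.sum_congr rfl
  intro I hI
  rw [mem_powerset] at hI
  rw [← Finset.card_powerset]
  have hIfacts : ∀ w ∈ I, Odd w ∧ w ∈ Finset.Icc 1 n := fun w hw => by
    have := hI hw; rw [mem_filter] at this; exact ⟨this.2, this.1⟩
  refine Finset.card_bij' (fun S _ => S.filter (fun v => Even v)) (fun J _ => I ∪ J)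
    ?_ ?_ ?_ ?_
  · -- forward map lands in powerset of free evens
    intro S hS
    simp only [indepSets, mem_filter, mem_powerset] at hS
    obtain ⟨⟨hsub, hind⟩, hfib⟩ := hS
    rw [mem_powerset]
    intro v hv
    rw [mem_filter] at hv
    obtain ⟨hvS, hvE⟩ := hv
    rw [mem_filter, mem_filter]
    refine ⟨⟨hsub hvS, hvE⟩, ?_⟩
    rintro (h | h)
    · have hvs : v + 1 ∈ S := by rw [← hfib] at h; exact (mem_filter.mp h).1
      exact hind v hvS hvs
    · have hv1 : v - 1 ∈ S := by rw [← hfib] at h; exact (mem_filter.mp h).1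
      have hv2 : 2 ≤ v := by
        have := hsub hvS; rw [mem_Icc] at this
        rcases hvE with ⟨k, hk⟩; omega
      have := hind (v - 1) hv1
      apply this
      rw [show v - 1 + 1 = v from by omega]
      exact hvS
  · -- backward map lands in the fiber
    intro J hJ
    rw [mem_powerset] at hJ
    have hJsub : ∀ w ∈ J, Even w ∧ w ∈ Finset.Icc 1 n ∧ ¬(w + 1 ∈ I ∨ w - 1 ∈ I) :=
      fun w hw => by
        have := hJ hw
        simp only [mem_filter] at this
        exact ⟨this.1.2, this.1.1, this.2⟩
    simp only [indepSets, mem_filter, mem_powerset]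
    refine ⟨⟨?_, ?_⟩, ?_⟩
    · intro v hv
      rcases mem_union.mp hv with h | h
      · exact (hIfacts v h).2
      · exact (hJsub v h).2.1
    · intro v hv hc
      rcases mem_union.mp hv with h | h
      · rcases mem_union.mp hc with h' | h'
        · rcases (hIfacts v h).1 with ⟨a, ha⟩
          rcases (hIfacts _ h').1 with ⟨b, hb⟩
          omega
        · apply (hJsub _ h').2.2
          right
          rw [Nat.add_sub_cancel]
          exact h
      · rcases mem_union.mp hc with h' | h'
        · exact (hJsub v h).2.2 (Or.inl h')
        · rcases (hJsub v h).1 with ⟨a, ha⟩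
          rcases (hJsub _ h').1 with ⟨b, hb⟩
          omega
    · ext w
      simp only [mem_filter, mem_union]
      constructor
      · rintro ⟨h | h, ho⟩
        · exact h
        · exfalso
          rcases (hJsub w h).1 with ⟨a, ha⟩
          rw [Nat.odd_iff] at ho
          omega
      · intro hw
        exact ⟨Or.inl hw, (hIfacts w hw).1⟩
  · -- left inverse : I ∪ S.filter Even = S
    intro S hS
    simp only [indepSets, mem_filter, mem_powerset] at hS
    obtain ⟨⟨hsub, hind⟩, hfib⟩ := hS
    subst hfib
    ext w
    simp only [mem_union, mem_filter]
    constructor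
    · rintro (⟨h, -⟩ | ⟨h, -⟩) <;> exact h
    · intro hw
      rcases Nat.even_or_odd w with he | ho
      · exact Or.inr ⟨hw, he⟩
      · exact Or.inl ⟨hw, ho⟩
  · -- right inverse : (I ∪ J).filter Even = J
    intro J hJ
    rw [mem_powerset] at hJ
    ext w
    simp only [mem_filter, mem_union]
    constructor
    · rintro ⟨h | h, he⟩
      · exfalso
        rcases (hIfacts w h).1 with ⟨a, ha⟩
        rcases he with ⟨b, hb⟩
        omega
      · exact h
    · intro hw
      refine ⟨Or.inr hw, ?_⟩
      have := hJ hw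
      simp only [mem_filter] at this
      exact this.1.2
end

section
/- Let F be a field and let H be the commutative F-algebra F[x_v : v ∈ V(G)] / (x_r^2 for r ∈ R; x_v^2 − x_v for v ∈ V(G)\R; x_u x_v for uv ∈ E(G)), where G is a finite simple graph and R ⊆ V(G). Then the monomials X_I = Π_{v∈I} x_v for independent sets I of G form an F-basis of H; in particular dim_F H = |I(G)|. -/
set_option linter.unusedSectionVars false
set_option synthInstance.maxHeartbeats 1000000
set_option maxHeartbeats 1000000

variable (F : Type*) [Field F] (V : Type*) [Fintype V] [DecidableEq V]

/-- `s` is an independent set of the simple graph `G`. -/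
def IndepSet (G : SimpleGraph V) (s : Finset V) : Prop :=
  ∀ u ∈ s, ∀ v ∈ s, ¬ G.Adj u v

open MvPolynomial in
/-- The ideal of relations: `x_r^2` for `r ∈ R`, `x_v^2 - x_v` for `v ∉ R`,
and `x_u x_v` for edges `uv`. -/
noncomputable def relIdeal (G : SimpleGraph V) (R : Finset V) : Ideal (MvPolynomial V F) :=
  Ideal.span ({p | ∃ r ∈ R, p = X r ^ 2} ∪
    {p | ∃ v, v ∉ R ∧ p = X v ^ 2 - X v} ∪
    {p | ∃ u v, G.Adj u v ∧ p = X u * X v})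

/-- The commutative algebra `H(G,R)`. -/
noncomputable abbrev HGR (G : SimpleGraph V) (R : Finset V) : Type _ :=
  MvPolynomial V F ⧸ relIdeal F V G R

namespace HGRaux

open MvPolynomial Finsupp

variable (G : SimpleGraph V) (R : Finset V)

lemma X_eq_monomial (v : V) : (X v : MvPolynomial V F) = monomial (Finsupp.single v 1) 1 := by
  rw [← pow_one (X v : MvPolynomial V F), X_pow_eq_monomial]

/-- Good exponent vectors: support independent and `R`-exponents at most 1. -/
def Good (σ : V →₀ ℕ) : Prop := IndepSet V G σ.support ∧ ∀ r ∈ R, σ r ≤ 1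

open Classical in
/-- value of the key linear map on a monomial -/
noncomputable def tfun (σ : V →₀ ℕ) : {s : Finset V // IndepSet V G s} →₀ F :=
  if h : Good V G R σ then Finsupp.single ⟨σ.support, h.1⟩ 1 else 0

/-- The key linear map detecting coefficients of independent monomials. -/
noncomputable def T : MvPolynomial V F →ₗ[F] ({s : Finset V // IndepSet V G s} →₀ F) :=
  (MvPolynomial.basisMonomials V F).constr F (tfun F V G R)

lemma T_monomial (σ : V →₀ ℕ) : T F V G R (monomial σ 1) = tfun F V G R σ := by
  have : (monomial σ (1 : F)) = basisMonomials V F σ := by rw [coe_basisMonomials]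
  rw [this, T, Module.Basis.constr_basis]

lemma support_add_single (σ : V →₀ ℕ) (v : V) (k : ℕ) (hk : k ≠ 0) :
    (σ + Finsupp.single v k).support = σ.support ∪ {v} := by
  ext a
  simp only [Finsupp.mem_support_iff, Finsupp.add_apply, Finsupp.single_apply,
    Finset.mem_union, Finset.mem_singleton]
  by_cases h : v = a
  · subst h; simp [hk]
  · simp [h, Ne.symm h]

lemma tfun_not_good (σ : V →₀ ℕ) (h : ¬ Good V G R σ) : tfun F V G R σ = 0 := by
  rw [tfun, dif_neg h]

lemma T_mul_XrSq (r : V) (hr : r ∈ R) (p : MvPolynomial V F) :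
    T F V G R (p * X r ^ 2) = 0 := by
  have key : (T F V G R) ∘ₗ (LinearMap.mulRight F (X r ^ 2 : MvPolynomial V F)) = 0 := by
    apply (basisMonomials V F).ext
    intro σ
    simp only [coe_basisMonomials, LinearMap.comp_apply, LinearMap.mulRight_apply,
      LinearMap.zero_apply]
    rw [X_pow_eq_monomial, monomial_mul, mul_one, T_monomial]
    apply tfun_not_good
    rintro ⟨-, h2⟩
    have := h2 r hr
    simp [Finsupp.add_apply, Finsupp.single_apply] at this
  have := congrFun (congrArg (fun f => f.toFun) key) p
  simpa using this

lemma T_mul_edge (u v : V) (huv : G.Adj u v) (p : MvPolynomial V F) :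
    T F V G R (p * (X u * X v)) = 0 := by
  have key : (T F V G R) ∘ₗ (LinearMap.mulRight F (X u * X v : MvPolynomial V F)) = 0 := by
    apply (basisMonomials V F).ext
    intro σ
    simp only [coe_basisMonomials, LinearMap.comp_apply, LinearMap.mulRight_apply,
      LinearMap.zero_apply]
    have hXuv : (X u * X v : MvPolynomial V F)
        = monomial (Finsupp.single u 1 + Finsupp.single v 1) 1 := by
      rw [X_eq_monomial, X_eq_monomial, monomial_mul, mul_one]
    rw [hXuv, monomial_mul, mul_one, T_monomial]
    apply tfun_not_good
    rintro ⟨h1, -⟩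
    have hne : u ≠ v := huv.ne
    have hu : u ∈ (σ + (Finsupp.single u 1 + Finsupp.single v 1)).support := by
      simp [Finsupp.mem_support_iff, Finsupp.add_apply, Finsupp.single_apply, hne]
    have hv : v ∈ (σ + (Finsupp.single u 1 + Finsupp.single v 1)).support := by
      simp [Finsupp.mem_support_iff, Finsupp.add_apply, Finsupp.single_apply, hne]
    exact h1 u hu v hv huv
  have := congrFun (congrArg (fun f => f.toFun) key) p
  simpa [mul_assoc] using this

lemma T_mul_idem (v : V) (hv : v ∉ R) (p : MvPolynomial V F) :
    T F V G R (p * (X v ^ 2 - X v)) = 0 := by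
  have key : (T F V G R) ∘ₗ (LinearMap.mulRight F (X v ^ 2 - X v : MvPolynomial V F)) = 0 := by
    apply (basisMonomials V F).ext
    intro σ
    simp only [coe_basisMonomials, LinearMap.comp_apply, LinearMap.mulRight_apply,
      LinearMap.zero_apply]
    rw [mul_sub, X_pow_eq_monomial, X_eq_monomial, monomial_mul, monomial_mul, mul_one,
      map_sub, T_monomial, T_monomial]
    have hsupp : (σ + Finsupp.single v 2).support = (σ + Finsupp.single v 1).support := by
      rw [support_add_single, support_add_single] <;> simp
    have happly : ∀ r ∈ R, (σ + Finsupp.single v 2 : V →₀ ℕ) r = (σ + Finsupp.single v 1 : V →₀ ℕ) r := by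
      intro r hr
      have : v ≠ r := fun h => hv (h ▸ hr)
      simp [Finsupp.add_apply, Finsupp.single_apply, this]
    have hgood : Good V G R (σ + Finsupp.single v 2) ↔ Good V G R (σ + Finsupp.single v 1) := by
      unfold Good
      rw [hsupp]
      constructor <;> rintro ⟨h1, h2⟩ <;> refine ⟨h1, fun r hr => ?_⟩
      · rw [← happly r hr]; exact h2 r hr
      · rw [happly r hr]; exact h2 r hr
    by_cases h : Good V G R (σ + Finsupp.single v 1)
    · rw [tfun, dif_pos (hgood.mpr h), tfun, dif_pos h, sub_eq_zero]
      congr 1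
      exact Subtype.ext hsupp
    · rw [tfun_not_good _ _ _ _ _ (fun hh => h (hgood.mp hh)), tfun_not_good _ _ _ _ _ h,
        sub_zero]
  have := congrFun (congrArg (fun f => f.toFun) key) p
  simpa using this

lemma T_zero_of_mem (q : MvPolynomial V F) (hq : q ∈ relIdeal F V G R) :
    T F V G R q = 0 := by
  have main : ∀ p : MvPolynomial V F, T F V G R (p * q) = 0 := by
    refine Submodule.span_induction (p := fun x _ => ∀ p, T F V G R (p * x) = 0)
      ?_ ?_ ?_ ?_ hq
    · rintro x hx p
      rcases hx with (hx | hx) | hx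
      · obtain ⟨r, hr, rfl⟩ := hx
        exact T_mul_XrSq F V G R r hr p
      · obtain ⟨v, hv, rfl⟩ := hx
        exact T_mul_idem F V G R v hv p
      · obtain ⟨u, v, huv, rfl⟩ := hx
        exact T_mul_edge F V G R u v huv p
    · intro p; rw [mul_zero, map_zero]
    · intro x y _ _ hx hy p
      rw [mul_add, map_add, hx, hy, add_zero]
    · intro a x _ hx p
      rw [smul_eq_mul, show p * (a * x) = (p * a) * x by ring, hx]
  simpa using main 1

/-- the exponent vector of a squarefree monomial -/
noncomputable def indic (s : Finset V) : V →₀ ℕ := ∑ v ∈ s, Finsupp.single v 1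

lemma indic_apply (s : Finset V) (a : V) : indic V s a = if a ∈ s then 1 else 0 := by
  rw [indic, Finsupp.finset_sum_apply]
  simp [Finsupp.single_apply, Finset.sum_ite_eq]

lemma indic_support (s : Finset V) : (indic V s).support = s := by
  ext a
  simp [Finsupp.mem_support_iff, indic_apply]

lemma monomial_indic (s : Finset V) :
    (monomial (indic V s) 1 : MvPolynomial V F) = ∏ v ∈ s, X v := by
  rw [indic, monomial_sum_one]
  refine Finset.prod_congr rfl fun v _ => ?_
  rw [X_eq_monomial]

lemma prodX_eq (I : {s : Finset V // IndepSet V G s}) :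
    (∏ v ∈ I.1, Ideal.Quotient.mk (relIdeal F V G R) (MvPolynomial.X v)) =
      Ideal.Quotient.mk (relIdeal F V G R) (monomial (indic V I.1) 1) := by
  rw [monomial_indic, map_prod]

lemma T_indic (I : {s : Finset V // IndepSet V G s}) :
    T F V G R (monomial (indic V I.1) 1) = Finsupp.single I 1 := by
  rw [T_monomial]
  have hgood : Good V G R (indic V I.1) := by
    constructor
    · rw [indic_support]; exact I.2
    · intro r _; rw [indic_apply]; split <;> omega
  rw [tfun, dif_pos hgood]
  congr 1
  exact Subtype.ext (indic_support V I.1)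

lemma sum_univ_single (v : V) : (∑ w : V, (Finsupp.single v 1 : V →₀ ℕ) w) = 1 := by
  simp [Finsupp.single_apply, Finset.sum_ite_eq]

/-- every monomial class lies in the span of the independent monomials -/
lemma mk_monomial_mem_span (σ : V →₀ ℕ) :
    Ideal.Quotient.mk (relIdeal F V G R) (monomial σ 1) ∈
      Submodule.span F (Set.range (fun I : {s : Finset V // IndepSet V G s} =>
        ∏ v ∈ I.1, Ideal.Quotient.mk (relIdeal F V G R) (MvPolynomial.X v))) := by
  classical
  suffices H : ∀ (n : ℕ) (σ : V →₀ ℕ), (∑ w : V, σ w) = n →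
      Ideal.Quotient.mk (relIdeal F V G R) (monomial σ 1) ∈
      Submodule.span F (Set.range (fun I : {s : Finset V // IndepSet V G s} =>
        ∏ v ∈ I.1, Ideal.Quotient.mk (relIdeal F V G R) (MvPolynomial.X v))) by
    exact H _ σ rfl
  intro n
  induction n using Nat.strong_induction_on with
  | _ n ih =>
  intro σ hσ
  by_cases hind : IndepSet V G σ.support
  · by_cases hR : ∀ r ∈ R, σ r ≤ 1
    · by_cases hone : ∀ v, σ v ≤ 1
      · -- squarefree: σ = indic of its support
        have hσeq : σ = indic V σ.support := by
          ext a
          rw [indic_apply]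
          split
          · next h =>
              have h1 := hone a
              have h2 : σ a ≠ 0 := Finsupp.mem_support_iff.mp h
              omega
          · next h => exact Finsupp.notMem_support_iff.mp h
        rw [hσeq, ← prodX_eq F V G R ⟨σ.support, hind⟩]
        exact Submodule.subset_span ⟨⟨σ.support, hind⟩, rfl⟩
      · -- some exponent ≥ 2, at a vertex not in R: reduce the exponent
        push_neg at hone
        obtain ⟨v, hv2⟩ := hone
        have hvR : v ∉ R := fun h => absurd (hR v h) (by omega)
        have hle : Finsupp.single v 1 ≤ σ := Finsupp.single_le_iff.mpr (by omega)
        have hle2 : Finsupp.single v 2 ≤ σ := Finsupp.single_le_iff.mpr (by omega)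
        set σ' := σ - Finsupp.single v 1 with hσ'def
        set τ := σ - Finsupp.single v 2 with hτdef
        have hadd : σ' + Finsupp.single v 1 = σ := tsub_add_cancel_of_le hle
        have hadd2 : τ + Finsupp.single v 2 = σ := tsub_add_cancel_of_le hle2
        have hτσ' : τ + Finsupp.single v 1 = σ' := by
          apply add_right_cancel (b := Finsupp.single v 1)
          rw [hadd, add_assoc, ← Finsupp.single_add, hadd2]
        have key : monomial σ (1:F) - monomial σ' 1 = monomial τ 1 * (X v ^ 2 - X v) := by
          rw [mul_sub, X_pow_eq_monomial, X_eq_monomial, monomial_mul, monomial_mul, mul_one,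
            hadd2, hτσ']
        have hzero : Ideal.Quotient.mk (relIdeal F V G R) (monomial σ (1:F) - monomial σ' 1)
            = 0 := by
          rw [key]
          refine Ideal.Quotient.eq_zero_iff_mem.mpr (Ideal.mul_mem_left _ _ ?_)
          exact Ideal.subset_span (Or.inl (Or.inr ⟨v, hvR, rfl⟩))
        have heq : Ideal.Quotient.mk (relIdeal F V G R) (monomial σ (1:F))
            = Ideal.Quotient.mk (relIdeal F V G R) (monomial σ' 1) := by
          rw [← sub_eq_zero, ← RingHom.map_sub, hzero]
        rw [heq]
        have hsum : (∑ w : V, σ' w) + 1 = n := by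
          rw [← hσ]
          have := congrArg (fun f : V →₀ ℕ => ∑ w : V, f w) hadd
          simp only [Finsupp.add_apply, Finset.sum_add_distrib] at this
          rw [sum_univ_single] at this
          omega
        exact ih (∑ w : V, σ' w) (by omega) σ' rfl
    · -- some R-exponent ≥ 2 : the monomial is zero
      push_neg at hR
      obtain ⟨r, hr, hr2⟩ := hR
      have hle2 : Finsupp.single r 2 ≤ σ := Finsupp.single_le_iff.mpr (by omega)
      have hadd2 : (σ - Finsupp.single r 2) + Finsupp.single r 2 = σ :=
        tsub_add_cancel_of_le hle2
      have key : monomial σ (1:F) = monomial (σ - Finsupp.single r 2) 1 * X r ^ 2 := by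
        rw [X_pow_eq_monomial, monomial_mul, mul_one, hadd2]
      have hzero : Ideal.Quotient.mk (relIdeal F V G R) (monomial σ (1:F)) = 0 := by
        rw [key]
        refine Ideal.Quotient.eq_zero_iff_mem.mpr (Ideal.mul_mem_left _ _ ?_)
        exact Ideal.subset_span (Or.inl (Or.inl ⟨r, hr, rfl⟩))
      rw [hzero]
      exact Submodule.zero_mem _
  · -- support not independent: the monomial is zero
    rw [IndepSet] at hind
    push_neg at hind
    obtain ⟨u, hu, v, hv, huv⟩ := hind
    have hne : u ≠ v := huv.ne
    have hle : Finsupp.single u 1 + Finsupp.single v 1 ≤ σ := by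
      intro a
      simp only [Finsupp.add_apply, Finsupp.single_apply]
      have hu' : σ u ≠ 0 := Finsupp.mem_support_iff.mp hu
      have hv' : σ v ≠ 0 := Finsupp.mem_support_iff.mp hv
      by_cases hua : u = a <;> by_cases hva : v = a
      · exact absurd (hua ▸ hva.symm ▸ rfl : u = v) hne
      · subst hua; simp [hva]; omega
      · subst hva; simp [hua]; omega
      · simp [hua, hva]
    have hadd : (σ - (Finsupp.single u 1 + Finsupp.single v 1))
        + (Finsupp.single u 1 + Finsupp.single v 1) = σ := tsub_add_cancel_of_le hle
    have key : monomial σ (1:F)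
        = monomial (σ - (Finsupp.single u 1 + Finsupp.single v 1)) 1 * (X u * X v) := by
      rw [show (X u * X v : MvPolynomial V F)
          = monomial (Finsupp.single u 1 + Finsupp.single v 1) 1 by
        rw [X_eq_monomial, X_eq_monomial, monomial_mul, mul_one]]
      rw [monomial_mul, mul_one, hadd]
    have hzero : Ideal.Quotient.mk (relIdeal F V G R) (monomial σ (1:F)) = 0 := by
      rw [key]
      refine Ideal.Quotient.eq_zero_iff_mem.mpr (Ideal.mul_mem_left _ _ ?_)
      exact Ideal.subset_span (Or.inr ⟨u, v, huv, rfl⟩)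
    rw [hzero]
    exact Submodule.zero_mem _

end HGRaux

/-- The monomials `X_I = Π_{v ∈ I} x_v`, for `I` ranging over the independent
sets of `G`, form an `F`-basis of `H(G,R)`; in particular
`dim_F H(G,R) = |I(G)|`. -/
theorem monomials_basis_of_HGR (G : SimpleGraph V) (R : Finset V) :
    LinearIndependent F (fun I : {s : Finset V // IndepSet V G s} =>
        ∏ v ∈ I.1, Ideal.Quotient.mk (relIdeal F V G R) (MvPolynomial.X v)) ∧
      Submodule.span F (Set.range (fun I : {s : Finset V // IndepSet V G s} =>
        ∏ v ∈ I.1, Ideal.Quotient.mk (relIdeal F V G R) (MvPolynomial.X v))) = ⊤ ∧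
      Module.finrank F (HGR F V G R) = Nat.card {s : Finset V // IndepSet V G s} := by
  classical
  open HGRaux MvPolynomial in
  haveI : Fintype {s : Finset V // IndepSet V G s} := Fintype.ofFinite _
  have hmkₐ : ∀ p : MvPolynomial V F,
      Ideal.Quotient.mkₐ F (relIdeal F V G R) p = Ideal.Quotient.mk (relIdeal F V G R) p :=
    fun p => rfl
  have hli : LinearIndependent F (fun I : {s : Finset V // IndepSet V G s} =>
      ∏ v ∈ I.1, Ideal.Quotient.mk (relIdeal F V G R) (MvPolynomial.X v)) := by
    rw [Fintype.linearIndependent_iff]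
    intro c hc I
    have h1 : Ideal.Quotient.mkₐ F (relIdeal F V G R)
        (∑ J : {s : Finset V // IndepSet V G s}, c J • monomial (indic V J.1) 1) = 0 := by
      rw [map_sum, ← hc]
      refine Finset.sum_congr rfl fun J _ => ?_
      rw [map_smul, hmkₐ, prodX_eq]
    have h2 : (∑ J : {s : Finset V // IndepSet V G s}, c J • monomial (indic V J.1) (1:F))
        ∈ relIdeal F V G R := by
      rw [hmkₐ] at h1
      exact (Ideal.Quotient.eq_zero_iff_mem).mp h1
    have h3 := T_zero_of_mem F V G R _ h2
    rw [map_sum] at h3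
    simp only [map_smul, T_indic] at h3
    have h4 := DFunLike.congr_fun h3 I
    simpa [Finsupp.smul_single, Finsupp.single_apply, Finset.sum_ite_eq] using h4
  have hspan : Submodule.span F (Set.range (fun I : {s : Finset V // IndepSet V G s} =>
      ∏ v ∈ I.1, Ideal.Quotient.mk (relIdeal F V G R) (MvPolynomial.X v))) = ⊤ := by
    rw [eq_top_iff]
    rintro q -
    obtain ⟨p, rfl⟩ := Ideal.Quotient.mk_surjective q
    rw [← hmkₐ, MvPolynomial.as_sum p, map_sum]
    apply Submodule.sum_mem
    intro σ _
    have : (monomial σ (coeff σ p) : MvPolynomial V F) = coeff σ p • monomial σ 1 := by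
      rw [smul_monomial, smul_eq_mul, mul_one]
    rw [this, map_smul]
    exact Submodule.smul_mem _ _ (by rw [hmkₐ]; exact mk_monomial_mem_span F V G R σ)
  refine ⟨hli, hspan, ?_⟩
  let b : Module.Basis {s : Finset V // IndepSet V G s} F (HGR F V G R) :=
    Module.Basis.mk hli (by rw [hspan])
  rw [Module.finrank_eq_nat_card_basis b]
end

section
/- Let H(G,R) be the algebra F[x_v : v ∈ V(G)]/(x_r^2, r∈R; x_v^2−x_v, v∉R; x_u x_v, uv∈E(G)). The elements e_I := (Π_{v∈I} x_v)·(Π_{u ∈ V(G)\R\I}(1−x_u)), for I ranging over independent sets of G−R, form a complete set of orthogonal idempotents summing to 1: e_I^2 = e_I, e_I e_J = 0 for I ≠ J, and Σ_I e_I = 1. -/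
variable (F : Type*) [Field F] (V : Type*) [Fintype V] [DecidableEq V]

instance (G : SimpleGraph V) [DecidableRel G.Adj] (s : Finset V) :
    Decidable (IndepSet V G s) := by
  unfold IndepSet; infer_instance

/-- The image of `x_v` in `H(G,R)`. -/
noncomputable def xQ (G : SimpleGraph V) (R : Finset V) (v : V) :
    MvPolynomial V F ⧸ relIdeal F V G R :=
  Ideal.Quotient.mk (relIdeal F V G R) (MvPolynomial.X v)

/-- The idempotent `e_I = X_I · Π_{u ∈ (V\R)\I} (1 - x_u)`. -/
noncomputable def eIdem (G : SimpleGraph V) (R : Finset V) (I : Finset V) :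
    MvPolynomial V F ⧸ relIdeal F V G R :=
  (∏ v ∈ I, xQ F V G R v) * ∏ u ∈ (Finset.univ \ R) \ I, (1 - xQ F V G R u)


section Aux

variable (G : SimpleGraph V) (R : Finset V)

lemma xQ_sq {v : V} (hv : v ∉ R) : xQ F V G R v * xQ F V G R v = xQ F V G R v := by
  have h : Ideal.Quotient.mk (relIdeal F V G R)
      (MvPolynomial.X v ^ 2 - MvPolynomial.X v) = 0 :=
    (Ideal.Quotient.eq_zero_iff_mem).mpr (Ideal.subset_span (Or.inl (Or.inr ⟨v, hv, rfl⟩)))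
  rw [RingHom.map_sub, RingHom.map_pow, sub_eq_zero] at h
  rw [← sq]; exact h

lemma xQ_adj {u v : V} (h : G.Adj u v) : xQ F V G R u * xQ F V G R v = 0 := by
  have h0 : Ideal.Quotient.mk (relIdeal F V G R)
      (MvPolynomial.X u * MvPolynomial.X v) = 0 :=
    (Ideal.Quotient.eq_zero_iff_mem).mpr (Ideal.subset_span (Or.inr ⟨u, v, h, rfl⟩))
  rw [RingHom.map_mul] at h0
  exact h0

lemma xQ_mul_one_sub {v : V} (hv : v ∉ R) : xQ F V G R v * (1 - xQ F V G R v) = 0 := by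
  have := xQ_sq F V G R hv
  linear_combination -this

lemma prodX_eq_zero {I : Finset V} (hI : ¬ IndepSet V G I) :
    (∏ v ∈ I, xQ F V G R v) = 0 := by
  unfold IndepSet at hI
  push_neg at hI
  obtain ⟨u, hu, v, hv, huv⟩ := hI
  have hne : v ≠ u := (G.ne_of_adj huv).symm
  rw [← Finset.mul_prod_erase _ _ hu,
    ← Finset.mul_prod_erase _ _ (Finset.mem_erase.mpr ⟨hne, hv⟩), ← mul_assoc,
    xQ_adj F V G R huv, zero_mul]

lemma eIdem_orth_aux {I J : Finset V} (hIs : I ⊆ Finset.univ \ R)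
    {v0 : V} (hv0I : v0 ∈ I) (hv0J : v0 ∉ J) :
    eIdem F V G R I * eIdem F V G R J = 0 := by
  have hv0R : v0 ∉ R := (Finset.mem_sdiff.mp (hIs hv0I)).2
  have hv0D : v0 ∈ (Finset.univ \ R) \ J :=
    Finset.mem_sdiff.mpr ⟨hIs hv0I, hv0J⟩
  unfold eIdem
  rw [← Finset.mul_prod_erase _ _ hv0I, ← Finset.mul_prod_erase _ _ hv0D]
  have h0 := xQ_mul_one_sub F V G R hv0R
  linear_combination ((∏ v ∈ I.erase v0, xQ F V G R v) *
    (∏ u ∈ (Finset.univ \ R) \ I, (1 - xQ F V G R u)) *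
    (∏ v ∈ J, xQ F V G R v) *
    (∏ u ∈ ((Finset.univ \ R) \ J).erase v0, (1 - xQ F V G R u))) * h0

end Aux

/-- The elements `e_I`, for `I` ranging over the independent sets of `G−R`,
form a complete set of orthogonal idempotents of `H(G,R)` summing to `1`. -/
theorem eIdem_complete_orthogonal_idempotents
    (G : SimpleGraph V) [DecidableRel G.Adj] (R : Finset V) :
    (∀ I ∈ (Finset.univ \ R).powerset.filter (fun s => IndepSet V G s),
        eIdem F V G R I * eIdem F V G R I = eIdem F V G R I) ∧
      (∀ I ∈ (Finset.univ \ R).powerset.filter (fun s => IndepSet V G s),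
        ∀ J ∈ (Finset.univ \ R).powerset.filter (fun s => IndepSet V G s),
          I ≠ J → eIdem F V G R I * eIdem F V G R J = 0) ∧
      ∑ I ∈ (Finset.univ \ R).powerset.filter (fun s => IndepSet V G s),
        eIdem F V G R I = 1 := by
  constructor
  · intro I hI
    rw [Finset.mem_filter, Finset.mem_powerset] at hI
    unfold eIdem
    rw [mul_mul_mul_comm, ← Finset.prod_mul_distrib, ← Finset.prod_mul_distrib]
    congr 1
    · exact Finset.prod_congr rfl fun v hv =>
        xQ_sq F V G R (Finset.mem_sdiff.mp (hI.1 hv)).2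
    · refine Finset.prod_congr rfl fun u hu => ?_
      have hR : u ∉ R := (Finset.mem_sdiff.mp (Finset.mem_sdiff.mp hu).1).2
      have h := xQ_sq F V G R hR
      linear_combination h
  constructor
  · intro I hI J hJ hne
    rw [Finset.mem_filter, Finset.mem_powerset] at hI hJ
    by_cases hsub : I ⊆ J
    · obtain ⟨v0, hv0J, hv0I⟩ := Finset.exists_of_ssubset (hsub.ssubset_of_ne hne)
      rw [mul_comm]
      exact eIdem_orth_aux F V G R hJ.1 hv0J hv0I
    · obtain ⟨v0, hv0I, hv0J⟩ := Finset.not_subset.mp hsub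
      exact eIdem_orth_aux F V G R hI.1 hv0I hv0J
  · have key : ∑ I ∈ (Finset.univ \ R).powerset, eIdem F V G R I = 1 := by
      have h := Finset.prod_add (fun u => xQ F V G R u)
        (fun u => 1 - xQ F V G R u) (Finset.univ \ R)
      simp only [add_sub_cancel, Finset.prod_const_one] at h
      unfold eIdem
      rw [← h]
    rw [← key]
    refine Finset.sum_subset (Finset.filter_subset _ _) fun I hI hnI => ?_
    rw [Finset.mem_filter, not_and] at hnI
    have hind := hnI hI
    unfold eIdem
    rw [prodX_eq_zero F V G R hind, zero_mul]
end

section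
/- In the algebra H(G,R) = F[x_v : v∈V(G)]/(x_r^2, r∈R; x_v^2−x_v, v∉R; x_u x_v, uv∈E(G)), the Jacobson radical equals the ideal generated by {x_r : r ∈ R}; in particular H(G,R) is semisimple if and only if R = ∅. -/
variable (F : Type*) [Field F] (V : Type*) [Fintype V] [DecidableEq V]

set_option linter.unusedSectionVars false
section Aux
open MvPolynomial

variable (G : SimpleGraph V) (R : Finset V)

/-- independent sets avoiding `R` -/
def IsGoodSet (I : Finset V) : Prop :=
  (∀ u ∈ I, ∀ v ∈ I, ¬ G.Adj u v) ∧ ∀ r ∈ R, r ∉ I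

/-- characteristic vector of a finset -/
def chi (I : Finset V) : V → F := fun v => if v ∈ I then 1 else 0

noncomputable def bigIdeal : Ideal (MvPolynomial V F) :=
  relIdeal F V G R ⊔ Ideal.span ((fun r => (X r : MvPolynomial V F)) '' (R : Set V))

lemma relIdeal_le_bigIdeal : relIdeal F V G R ≤ bigIdeal F V G R := le_sup_left

lemma X_mem_bigIdeal {r : V} (hr : r ∈ R) : (X r : MvPolynomial V F) ∈ bigIdeal F V G R :=
  Ideal.mem_sup_right (Ideal.subset_span ⟨r, hr, rfl⟩)

lemma Xsq_sub_mem {v : V} (hv : v ∉ R) :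
    (X v ^ 2 - X v : MvPolynomial V F) ∈ bigIdeal F V G R :=
  relIdeal_le_bigIdeal F V G R (Ideal.subset_span (Or.inl (Or.inr ⟨v, hv, rfl⟩)))

lemma XX_mem {u v : V} (huv : G.Adj u v) :
    (X u * X v : MvPolynomial V F) ∈ bigIdeal F V G R :=
  relIdeal_le_bigIdeal F V G R (Ideal.subset_span (Or.inr ⟨u, v, huv, rfl⟩))

lemma Xsq_mem {r : V} (hr : r ∈ R) : (X r ^ 2 : MvPolynomial V F) ∈ relIdeal F V G R :=
  Ideal.subset_span (Or.inl (Or.inl ⟨r, hr, rfl⟩))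

lemma bigIdeal_le_ker {I : Finset V} (hI : IsGoodSet V G R I) :
    bigIdeal F V G R ≤ RingHom.ker (aeval (R := F) (chi F V I) : MvPolynomial V F →ₐ[F] F) := by
  rw [bigIdeal, relIdeal, ← Ideal.span_union,
    Ideal.span_le]
  rintro p (((⟨r, hr, rfl⟩ | ⟨v, hv, rfl⟩) | ⟨u, v, huv, rfl⟩) | ⟨r, hr, rfl⟩) <;>
    simp only [SetLike.mem_coe, RingHom.mem_ker, map_pow, map_sub, map_mul, aeval_X]
  · have : r ∉ I := hI.2 r hr
    simp [chi, this]
  · by_cases h : v ∈ I <;> simp [chi, h]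
  · by_cases hu : u ∈ I
    · have : v ∉ I := fun hv => hI.1 u hu v hv huv
      simp [chi, this]
    · simp [chi, hu]
  · have : r ∉ I := hI.2 r hr
    simp [chi, this]

lemma aeval_chi_prod (I J : Finset V) :
    aeval (R := F) (chi F V J) (∏ v ∈ I, X v) = if I ⊆ J then (1 : F) else 0 := by
  rw [map_prod]
  simp only [aeval_X]
  by_cases h : I ⊆ J
  · rw [if_pos h]
    refine Finset.prod_eq_one fun v hv => ?_
    simp [chi, h hv]
  · rw [if_neg h]
    obtain ⟨v, hvI, hvJ⟩ := Finset.not_subset.1 h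
    exact Finset.prod_eq_zero hvI (by simp [chi, hvJ])

noncomputable def qmk : MvPolynomial V F →ₐ[F] (MvPolynomial V F ⧸ bigIdeal F V G R) :=
  Ideal.Quotient.mkₐ F (bigIdeal F V G R)

lemma qmk_eq_zero_iff {f : MvPolynomial V F} :
    qmk F V G R f = 0 ↔ f ∈ bigIdeal F V G R := by
  rw [qmk, Ideal.Quotient.mkₐ_eq_mk, Ideal.Quotient.eq_zero_iff_mem]

lemma quot_mem_span (f : MvPolynomial V F) :
    qmk F V G R f ∈
      Submodule.span F (Set.range fun I : {I : Finset V // IsGoodSet V G R I} =>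
        qmk F V G R (∏ v ∈ I.1, X v)) := by
  induction f using MvPolynomial.induction_on' with
  | add p q hp hq => rw [map_add]; exact Submodule.add_mem _ hp hq
  | monomial d c =>
    have hmono : qmk F V G R ((monomial d) c) =
        qmk F V G R (C c) * ∏ v ∈ d.support, (qmk F V G R (X v)) ^ d v := by
      rw [monomial_eq, map_mul, Finsupp.prod, map_prod]
      simp [map_pow]
    by_cases hR : ∃ r ∈ R, r ∈ d.support
    · obtain ⟨r, hrR, hrs⟩ := hR
      have hX0 : qmk F V G R (X r) = 0 := (qmk_eq_zero_iff F V G R).2 (X_mem_bigIdeal F V G R hrR)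
      have : (qmk F V G R (X r)) ^ d r = 0 := by
        rw [hX0, zero_pow (Finsupp.mem_support_iff.1 hrs)]
      rw [hmono, Finset.prod_eq_zero hrs this, mul_zero]
      exact Submodule.zero_mem _
    · -- all vars outside R; collapse powers
      have hid : ∀ v ∈ d.support, IsIdempotentElem (qmk F V G R (X v)) := by
        intro v hv
        have hvR : v ∉ R := fun h => hR ⟨v, h, hv⟩
        show qmk F V G R (X v) * qmk F V G R (X v) = qmk F V G R (X v)
        rw [← map_mul, ← sub_eq_zero, ← map_sub, qmk_eq_zero_iff]
        have := Xsq_sub_mem F V G R hvR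
        rwa [pow_two] at this
      have hpow : ∏ v ∈ d.support, (qmk F V G R (X v)) ^ d v
          = ∏ v ∈ d.support, qmk F V G R (X v) := by
        refine Finset.prod_congr rfl fun v hv => ?_
        obtain ⟨n, hn⟩ := Nat.exists_eq_succ_of_ne_zero (Finsupp.mem_support_iff.1 hv)
        rw [hn]
        exact (hid v hv).pow_succ_eq n
      by_cases hAdj : ∃ u ∈ d.support, ∃ v ∈ d.support, G.Adj u v
      · obtain ⟨u, hu, v, hv, huv⟩ := hAdj
        have h0 : qmk F V G R (X u) * qmk F V G R (X v) = 0 := by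
          rw [← map_mul, qmk_eq_zero_iff]
          exact XX_mem F V G R huv
        have hveu : v ∈ d.support.erase u := Finset.mem_erase.2 ⟨huv.ne', hv⟩
        have : ∏ w ∈ d.support, qmk F V G R (X w) = 0 := by
          rw [← Finset.mul_prod_erase _ _ hu, ← Finset.mul_prod_erase _ _ hveu,
            ← mul_assoc, h0, zero_mul]
        rw [hmono, hpow, this, mul_zero]
        exact Submodule.zero_mem _
      · -- good set
        have hgood : IsGoodSet V G R d.support :=
          ⟨fun u hu v hv hadj => hAdj ⟨u, hu, v, hv, hadj⟩, fun r hr hrI => hR ⟨r, hr, hrI⟩⟩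
        have key : qmk F V G R ((monomial d) c) = c • qmk F V G R (∏ v ∈ d.support, X v) := by
          rw [hmono, hpow, ← map_prod, ← map_mul, ← map_smul, smul_eq_C_mul]
        rw [key]
        exact Submodule.smul_mem _ c (Submodule.subset_span ⟨⟨d.support, hgood⟩, rfl⟩)


/-- evaluation functional on the quotient by `bigIdeal` -/
noncomputable def evalB (I : Finset V) (hI : IsGoodSet V G R I) :
    (MvPolynomial V F ⧸ bigIdeal F V G R) →ₐ[F] F :=
  Ideal.Quotient.liftₐ (bigIdeal F V G R) (aeval (chi F V I))
    (fun a ha => RingHom.mem_ker.1 (bigIdeal_le_ker F V G R hI ha))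

lemma evalB_qmk (I : Finset V) (hI : IsGoodSet V G R I) (f : MvPolynomial V F) :
    evalB F V G R I hI (qmk F V G R f) = aeval (chi F V I) f := by
  rw [evalB, qmk, Ideal.Quotient.mkₐ_eq_mk, Ideal.Quotient.liftₐ_apply]
  rfl

lemma mem_bigIdeal_of_forall_eval {f : MvPolynomial V F}
    (hf : ∀ I : Finset V, IsGoodSet V G R I → aeval (chi F V I) f = 0) :
    f ∈ bigIdeal F V G R := by
  rw [← qmk_eq_zero_iff F V G R]
  obtain ⟨c, hc⟩ := Finsupp.mem_span_range_iff_exists_finsupp.1 (quot_mem_span F V G R f)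
  suffices hcz : c = 0 by rw [← hc, hcz, Finsupp.sum_zero_index]
  by_contra hne
  obtain ⟨I₀, hI₀mem, hmin⟩ :=
    Finset.exists_min_image c.support (fun I => I.1.card) (Finsupp.support_nonempty_iff.2 hne)
  have heval : evalB F V G R I₀.1 I₀.2 (qmk F V G R f) = 0 := by
    rw [evalB_qmk]; exact hf I₀.1 I₀.2
  rw [← hc, map_finsuppSum] at heval
  have heval2 : (c.sum fun I a => a * if I.1 ⊆ I₀.1 then (1:F) else 0) = 0 := by
    refine Eq.trans ?_ heval
    refine Finsupp.sum_congr fun I _ => ?_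
    rw [map_smul, evalB_qmk, aeval_chi_prod, smul_eq_mul]
  rw [Finsupp.sum] at heval2
  have hsum : (∑ I ∈ c.support, c I * if I.1 ⊆ I₀.1 then (1:F) else 0) = c I₀ := by
    rw [Finset.sum_eq_single_of_mem I₀ hI₀mem]
    · simp
    · intro J hJ hJne
      by_cases hsub : (J.1 : Finset V) ⊆ I₀.1
      · exfalso
        have : I₀.1.card ≤ J.1.card := hmin J hJ
        have : J.1 = I₀.1 := Finset.eq_of_subset_of_card_le hsub this
        exact hJne (Subtype.ext this)
      · rw [if_neg hsub, mul_zero]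
  rw [hsum] at heval2
  exact Finsupp.mem_support_iff.1 hI₀mem heval2


noncomputable def PhiBar : (MvPolynomial V F ⧸ bigIdeal F V G R) →ₐ[F]
    ({I : Finset V // IsGoodSet V G R I} → F) :=
  Pi.algHom F _ fun I => evalB F V G R I.1 I.2

lemma PhiBar_injective : Function.Injective (PhiBar F V G R) := by
  rw [injective_iff_map_eq_zero]
  intro a ha
  obtain ⟨f, rfl⟩ := Ideal.Quotient.mkₐ_surjective F (bigIdeal F V G R) a
  rw [show Ideal.Quotient.mkₐ F (bigIdeal F V G R) f = qmk F V G R f from rfl] at ha ⊢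
  rw [qmk_eq_zero_iff]
  refine mem_bigIdeal_of_forall_eval F V G R fun I hI => ?_
  have := congrFun ha ⟨I, hI⟩
  rwa [show PhiBar F V G R (qmk F V G R f) ⟨I, hI⟩ = evalB F V G R I hI (qmk F V G R f) from rfl,
    evalB_qmk] at this

lemma aeval_delta (I J : Finset V) :
    aeval (R := F) (chi F V I) ((∏ v ∈ J, X v) * ∏ v ∈ Jᶜ, (1 - X v)) =
      if J = I then (1 : F) else 0 := by
  rw [map_mul, aeval_chi_prod, map_prod]
  simp only [map_sub, map_one, aeval_X]
  by_cases h : J = I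
  · subst h
    rw [if_pos rfl, if_pos (subset_refl _)]
    rw [Finset.prod_eq_one, mul_one]
    intro v hv
    have hvJ : v ∉ J := Finset.mem_compl.1 hv
    simp [chi, hvJ]
  · rw [if_neg h]
    by_cases hsub : J ⊆ I
    · obtain ⟨v, hvI, hvJ⟩ : ∃ v ∈ I, v ∉ J := by
        by_contra hno
        push_neg at hno
        exact h (Finset.Subset.antisymm hsub hno)
      rw [if_pos hsub, one_mul]
      refine Finset.prod_eq_zero (Finset.mem_compl.2 hvJ) ?_
      simp [chi, hvI]
    · rw [if_neg hsub, zero_mul]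

lemma PhiBar_surjective : Function.Surjective (PhiBar F V G R) := by
  classical
  letI : Fintype {I : Finset V // IsGoodSet V G R I} := Fintype.ofFinite _
  intro g
  refine ⟨qmk F V G R (∑ J : {I : Finset V // IsGoodSet V G R I},
    C (g J) * ((∏ v ∈ J.1, X v) * ∏ v ∈ J.1ᶜ, (1 - X v))), ?_⟩
  funext I
  rw [show PhiBar F V G R (qmk F V G R _) I = evalB F V G R I.1 I.2 (qmk F V G R _) from rfl,
    evalB_qmk, map_sum]
  rw [Finset.sum_eq_single_of_mem I (Finset.mem_univ I)]
  · rw [map_mul, aeval_delta, if_pos rfl, mul_one, aeval_C]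
    simp
  · intro J _ hJne
    rw [map_mul, aeval_delta, if_neg (fun h => hJne (Subtype.ext h)), mul_zero]

/-- evaluation functional on `H(G,R)` -/
noncomputable def evalA (I : Finset V) (hI : IsGoodSet V G R I) :
    (MvPolynomial V F ⧸ relIdeal F V G R) →ₐ[F] F :=
  Ideal.Quotient.liftₐ (relIdeal F V G R) (aeval (chi F V I))
    (fun a ha => RingHom.mem_ker.1 (bigIdeal_le_ker F V G R hI (relIdeal_le_bigIdeal F V G R ha)))

lemma evalA_mk (I : Finset V) (hI : IsGoodSet V G R I) (f : MvPolynomial V F) :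
    evalA F V G R I hI (Ideal.Quotient.mk (relIdeal F V G R) f) = aeval (chi F V I) f := by
  rw [evalA, Ideal.Quotient.liftₐ_apply]
  rfl

lemma evalA_surjective (I : Finset V) (hI : IsGoodSet V G R I) :
    Function.Surjective (evalA F V G R I hI) := fun x =>
  ⟨Ideal.Quotient.mk (relIdeal F V G R) (C x), by rw [evalA_mk]; simp⟩

lemma mem_J_iff (f : MvPolynomial V F) :
    Ideal.Quotient.mk (relIdeal F V G R) f ∈
      Ideal.span ((fun r => Ideal.Quotient.mk (relIdeal F V G R) (X r)) '' (R : Set V)) ↔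
    f ∈ bigIdeal F V G R := by
  have himg : (fun r => Ideal.Quotient.mk (relIdeal F V G R) (X r)) '' (R : Set V) =
      (Ideal.Quotient.mk (relIdeal F V G R)) '' ((fun r => (X r : MvPolynomial V F)) '' (R : Set V)) := by
    rw [Set.image_image]
  rw [himg, ← Ideal.map_span, ← Ideal.mem_comap,
    Ideal.comap_map_of_surjective _ Ideal.Quotient.mk_surjective]
  rw [← RingHom.ker_eq_comap_bot, Ideal.mk_ker, bigIdeal, sup_comm]


lemma jacobson_bot_eq_J :
    (⊥ : Ideal (MvPolynomial V F ⧸ relIdeal F V G R)).jacobson =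
      Ideal.span ((fun r => Ideal.Quotient.mk (relIdeal F V G R) (MvPolynomial.X r)) ''
        (R : Set V)) := by
  set J := Ideal.span ((fun r => Ideal.Quotient.mk (relIdeal F V G R) (MvPolynomial.X r)) ''
    (R : Set V)) with hJdef
  have hJi : J = ⨅ I : {I : Finset V // IsGoodSet V G R I},
      RingHom.ker (evalA F V G R I.1 I.2) := by
    ext a
    obtain ⟨f, rfl⟩ := Ideal.Quotient.mk_surjective a
    rw [hJdef, mem_J_iff, Ideal.mem_iInf]
    constructor
    · intro hf I
      rw [RingHom.mem_ker, evalA_mk]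
      exact bigIdeal_le_ker F V G R I.2 hf
    · intro h
      refine mem_bigIdeal_of_forall_eval F V G R fun I hI => ?_
      have := h ⟨I, hI⟩
      rwa [RingHom.mem_ker, evalA_mk] at this
  refine le_antisymm ?_ ?_
  · calc (⊥ : Ideal (MvPolynomial V F ⧸ relIdeal F V G R)).jacobson
        ≤ J.jacobson := Ideal.jacobson_mono bot_le
      _ ≤ ⨅ I : {I : Finset V // IsGoodSet V G R I}, RingHom.ker (evalA F V G R I.1 I.2) := by
          refine le_iInf fun I => sInf_le ⟨?_, ?_⟩
          · rw [hJi]; exact iInf_le _ I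
          · exact RingHom.ker_isMaximal_of_surjective _ (evalA_surjective F V G R I.1 I.2)
      _ = J := hJi.symm
  · rw [hJdef, Ideal.span_le]
    rintro a ⟨r, hr, rfl⟩
    refine Ideal.radical_le_jacobson ⟨2, ?_⟩
    rw [Ideal.mem_bot, ← map_pow, Ideal.Quotient.eq_zero_iff_mem]
    exact Xsq_mem F V G R hr

lemma X_not_mem_relIdeal {r : V} (hr : r ∈ R) :
    (X r : MvPolynomial V F) ∉ relIdeal F V G R := by
  intro hmem
  classical
  set ev : MvPolynomial V F →ₐ[F] DualNumber F :=
    aeval (fun v => if v = r then (DualNumber.eps : DualNumber F) else 0) with hev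
  have hker : relIdeal F V G R ≤ RingHom.ker ev := by
    rw [relIdeal, Ideal.span_le]
    rintro p ((⟨s, hs, rfl⟩ | ⟨v, hv, rfl⟩) | ⟨u, v, huv, rfl⟩) <;>
      simp only [SetLike.mem_coe, RingHom.mem_ker, map_pow, map_sub, map_mul, hev, aeval_X]
    · by_cases h : s = r
      · rw [if_pos h, sq, DualNumber.eps_mul_eps]
      · rw [if_neg h]; simp
    · have : v ≠ r := fun h => hv (h ▸ hr)
      rw [if_neg this]; simp
    · by_cases hu : u = r
      · have : v ≠ r := fun h => huv.ne (hu.trans h.symm)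
        rw [if_neg this, mul_zero]
      · rw [if_neg hu, zero_mul]
  have h0 : ev (X r) = 0 := hker hmem
  rw [hev, aeval_X, if_pos rfl] at h0
  have h1 := congrArg TrivSqZeroExt.snd h0
  rw [DualNumber.snd_eps, TrivSqZeroExt.snd_zero] at h1
  exact one_ne_zero h1

lemma jacobson_bot_of_isSemisimpleRing (A : Type*) [CommRing A] [IsSemisimpleRing A] :
    (⊥ : Ideal A).jacobson = ⊥ := by
  refine eq_bot_iff.2 fun x hx => ?_
  obtain ⟨c, hc⟩ := exists_isCompl (Ideal.span {x})
  have h1 : (1 : A) ∈ Ideal.span {x} ⊔ c := by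
    rw [hc.sup_eq_top]; trivial
  obtain ⟨u, hu, y, hy, huy⟩ := Submodule.mem_sup.1 h1
  obtain ⟨a, rfl⟩ := Ideal.mem_span_singleton'.1 hu
  have hxy : x * y = 0 := by
    have h2 : x * y ∈ Ideal.span {x} ⊓ c :=
      ⟨Ideal.mem_span_singleton'.2 ⟨y, mul_comm _ _⟩, Ideal.mul_mem_left c x hy⟩
    rw [hc.inf_eq_bot] at h2
    exact h2
  have hxx : x * (a * x) = x := by
    have := congrArg (x * ·) huy
    simpa [mul_add, hxy] using this
  have hunit : IsUnit (x * (-a) + 1) := Ideal.mem_jacobson_bot.1 hx (-a)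
  obtain ⟨w, hw⟩ := hunit
  have hzero : x * (x * (-a) + 1) = 0 := by
    rw [mul_add, mul_one]
    rw [show x * (x * (-a)) = -(x * (a * x)) by ring, hxx, neg_add_cancel]
  rw [Ideal.mem_bot]
  calc x = x * ((w : A) * (w⁻¹ : Aˣ)) := by rw [Units.mul_inv, mul_one]
    _ = x * (x * (-a) + 1) * (w⁻¹ : Aˣ) := by rw [← mul_assoc, hw]
    _ = 0 := by rw [hzero, zero_mul]

end Aux

open MvPolynomial in
/-- The Jacobson radical of `H(G,R)` is the ideal generated by `{x_r : r ∈ R}`;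
in particular `H(G,R)` is semisimple if and only if `R = ∅`. -/
theorem jacobson_radical_of_HGR (G : SimpleGraph V) (R : Finset V) :
    (⊥ : Ideal (MvPolynomial V F ⧸ relIdeal F V G R)).jacobson =
        Ideal.span ((fun r => Ideal.Quotient.mk (relIdeal F V G R) (MvPolynomial.X r)) ''
          (R : Set V)) ∧
      (IsSemisimpleRing (MvPolynomial V F ⧸ relIdeal F V G R) ↔ R = ∅) := by
  refine ⟨jacobson_bot_eq_J F V G R, ?_, ?_⟩
  · -- semisimple → R = ∅
    intro hss
    have hjac := jacobson_bot_of_isSemisimpleRing (MvPolynomial V F ⧸ relIdeal F V G R)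
    rw [jacobson_bot_eq_J F V G R] at hjac
    rw [Finset.eq_empty_iff_forall_notMem]
    intro r hr
    have hmem : Ideal.Quotient.mk (relIdeal F V G R) (X r) ∈
        Ideal.span ((fun r => Ideal.Quotient.mk (relIdeal F V G R) (MvPolynomial.X r)) ''
          (R : Set V)) :=
      Ideal.subset_span ⟨r, hr, rfl⟩
    rw [hjac, Ideal.mem_bot, Ideal.Quotient.eq_zero_iff_mem] at hmem
    exact X_not_mem_relIdeal F V G R hr hmem
  · -- R = ∅ → semisimple
    rintro rfl
    have hbig : bigIdeal F V G ∅ = relIdeal F V G ∅ := by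
      rw [bigIdeal]
      simp
    have e1 : ({I : Finset V // IsGoodSet V G ∅ I} → F) ≃+*
        (MvPolynomial V F ⧸ bigIdeal F V G ∅) :=
      (RingEquiv.ofBijective (PhiBar F V G ∅).toRingHom
        ⟨PhiBar_injective F V G ∅, PhiBar_surjective F V G ∅⟩).symm
    have e2 : (MvPolynomial V F ⧸ bigIdeal F V G ∅) ≃+*
        (MvPolynomial V F ⧸ relIdeal F V G ∅) := Ideal.quotEquivOfEq hbig
    have : IsSemisimpleRing ({I : Finset V // IsGoodSet V G ∅ I} → F) := inferInstance
    have h2 : IsSemisimpleRing (MvPolynomial V F ⧸ bigIdeal F V G ∅) := e1.isSemisimpleRing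
    exact e2.isSemisimpleRing
end

section
/- Let F be a field and let A be the F-algebra generated by T_s, T_t subject to T_s^2 = T_s, (T_t − 1)(T_t + q) = 0 with q ∈ F, q ≠ 0, and the braid relation T_s T_t T_s = T_t T_s T_t. Then T_s T_t = T_t T_s = T_s; in particular A is commutative. -/
/-- If `T_s, T_t` are elements of an `F`-algebra with `T_s² = T_s`,
`(T_t − 1)(T_t + q) = 0` for some `q ≠ 0`, and the braid relation
`T_s T_t T_s = T_t T_s T_t`, then `T_s T_t = T_t T_s = T_s`. -/
theorem hecke_zero_nonzero_commute (F : Type*) [Field F] (A : Type*) [Ring A] [Algebra F A]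
    (Ts Tt : A) (q : F) (hq : q ≠ 0)
    (hs : Ts * Ts = Ts)
    (ht : (Tt - 1) * (Tt + algebraMap F A q) = 0)
    (hbraid : Ts * Tt * Ts = Tt * Ts * Tt) :
    Ts * Tt = Tt * Ts ∧ Tt * Ts = Ts := by
  set c := algebraMap F A q with hcdef
  have hcomm : ∀ x : A, c * x = x * c := fun x => Algebra.commutes q x
  have cancel : ∀ x y : A, c * x = c * y → x = y := by
    intro x y h
    have h' : q • x = q • y := by
      simpa [hcdef, Algebra.smul_def] using h
    calc x = q⁻¹ • (q • x) := (inv_smul_smul₀ hq x).symm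
    _ = q⁻¹ • (q • y) := by rw [h']
    _ = y := inv_smul_smul₀ hq y
  have h2 : Tt * Tt = Tt + c - Tt * c := by
    have e : Tt * Tt - (Tt + c - Tt * c) = (Tt - 1) * (Tt + c) := by noncomm_ring
    rw [ht] at e
    exact sub_eq_zero.mp e
  -- Step 1: Ts*Tt*Ts = Ts*Tt
  have eqA : Tt * (Ts * Tt * Ts) = Ts * Tt * Ts := by
    calc Tt * (Ts * Tt * Ts) = (Tt * Ts * Tt) * Ts := by noncomm_ring
    _ = (Ts * Tt * Ts) * Ts := by rw [← hbraid]
    _ = Ts * Tt * (Ts * Ts) := by noncomm_ring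
    _ = Ts * Tt * Ts := by rw [hs]
  have eqB : Tt * (Ts * Tt * Ts) = Ts * Tt * Ts + c * (Ts * Tt) - c * (Ts * Tt * Ts) := by
    calc Tt * (Ts * Tt * Ts) = (Tt * Tt) * (Ts * Tt) := by rw [hbraid]; noncomm_ring
    _ = (Tt + c - Tt * c) * (Ts * Tt) := by rw [h2]
    _ = Tt * Ts * Tt + c * (Ts * Tt) - (Tt * c) * (Ts * Tt) := by noncomm_ring
    _ = Tt * Ts * Tt + c * (Ts * Tt) - (c * Tt) * (Ts * Tt) := by rw [hcomm Tt]
    _ = Tt * Ts * Tt + c * (Ts * Tt) - c * (Tt * Ts * Tt) := by noncomm_ring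
    _ = Ts * Tt * Ts + c * (Ts * Tt) - c * (Ts * Tt * Ts) := by rw [← hbraid]
  have step1 : Ts * Tt * Ts = Ts * Tt := by
    apply cancel
    have h := eqA.symm.trans eqB
    rw [add_sub_assoc] at h
    have h' := left_eq_add.mp h
    rw [sub_eq_zero] at h'
    exact h'.symm
  -- Step 2: Tt*Ts = Ts
  have step1' : Tt * Ts * Tt = Ts * Tt := hbraid ▸ step1
  have eqC : (Tt * Ts * Tt) * Tt = Ts * Tt + c * (Tt * Ts) - c * (Ts * Tt) := by
    calc (Tt * Ts * Tt) * Tt = Tt * Ts * (Tt * Tt) := by noncomm_ring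
    _ = Tt * Ts * (Tt + c - Tt * c) := by rw [h2]
    _ = Tt * Ts * Tt + (Tt * Ts) * c - (Tt * Ts * Tt) * c := by noncomm_ring
    _ = Tt * Ts * Tt + c * (Tt * Ts) - c * (Tt * Ts * Tt) := by
        rw [← hcomm (Tt * Ts), ← hcomm (Tt * Ts * Tt)]
    _ = Ts * Tt + c * (Tt * Ts) - c * (Ts * Tt) := by rw [step1']
  have eqD : (Tt * Ts * Tt) * Tt = Ts * Tt + c * Ts - c * (Ts * Tt) := by
    calc (Tt * Ts * Tt) * Tt = (Ts * Tt) * Tt := by rw [step1']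
    _ = Ts * (Tt * Tt) := by noncomm_ring
    _ = Ts * (Tt + c - Tt * c) := by rw [h2]
    _ = Ts * Tt + Ts * c - (Ts * Tt) * c := by noncomm_ring
    _ = Ts * Tt + c * Ts - c * (Ts * Tt) := by rw [← hcomm Ts, ← hcomm (Ts * Tt)]
  have step2 : Tt * Ts = Ts := by
    apply cancel
    have h := eqC.symm.trans eqD
    exact (add_right_inj _).mp (sub_left_inj.mp h)
  -- Step 3: Ts*Tt = Ts
  have step3 : Ts * Tt = Ts := by
    calc Ts * Tt = Ts * Tt * Ts := step1.symm
    _ = Ts * (Tt * Ts) := by noncomm_ring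
    _ = Ts * Ts := by rw [step2]
    _ = Ts := hs
  exact ⟨step3.trans step2.symm, step2⟩
end

section
/- Let F be a field and m ≥ 3 an odd integer. Let A be the F-algebra generated by T_s, T_t with relations T_s^2 = T_s, (T_t−1)(T_t+q) = 0 for some nonzero q ∈ F, and the braid relation (T_s T_t T_s ⋯)_m = (T_t T_s T_t ⋯)_m (alternating products of m factors). Then dim_F A = 2m − 3, with basis consisting of the alternating products (T_s T_t T_s⋯)_k and (T_t T_s T_t⋯)_k for k = 0, 1, ..., m−2 (the two products for k=0 both being 1). -/
/-- The alternating product `(a b a ⋯)` with `n` factors, starting with `a`. -/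
def altProd {A : Type*} [Monoid A] (a b : A) (n : ℕ) : A :=
  ((List.range n).map (fun i => if Even i then a else b)).prod

section altProd
variable {A : Type*} [Monoid A] (a b : A)

@[simp] lemma altProd_zero : altProd a b 0 = 1 := by simp [altProd]

lemma altProd_succ_right (k : ℕ) :
    altProd a b (k+1) = altProd a b k * (if Even k then a else b) := by
  simp [altProd, List.range_succ]

lemma altProd_succ_left (k : ℕ) : altProd a b (k+1) = a * altProd b a k := by
  induction k with
  | zero => simp [altProd, List.range_succ]
  | succ k ih =>
      rw [altProd_succ_right, ih, altProd_succ_right, mul_assoc]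
      congr 1
      by_cases h : Even k <;> simp [h, Nat.even_add_one]

@[simp] lemma altProd_one : altProd a b 1 = a := by
  rw [altProd_succ_left]; simp

lemma altProd_two_mul (r : ℕ) : altProd a b (2*r) = (a*b)^r := by
  induction r with
  | zero => simp
  | succ n ih =>
      have : 2*(n+1) = (2*n+1)+1 := by ring
      rw [this, altProd_succ_right, altProd_succ_right, ih]
      have he : Even (2*n) := even_two_mul n
      simp [he, Nat.even_add_one, pow_succ, mul_assoc]

lemma altProd_two_mul_add_one (r : ℕ) : altProd a b (2*r+1) = (a*b)^r * a := by
  rw [altProd_succ_right, altProd_two_mul]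
  simp [even_two_mul]

lemma altProd_odd_swap (r : ℕ) : altProd b a (2*r+1) = b * (a*b)^r := by
  rw [altProd_succ_left, altProd_two_mul]

lemma map_altProd {B : Type*} [Monoid B] {F' : Type*} [FunLike F' A B]
    [MonoidHomClass F' A B] (f : F') (k : ℕ) :
    f (altProd a b k) = altProd (f a) (f b) k := by
  unfold altProd
  rw [← List.prod_hom _ f]  -- maybe map_list_prod
  rw [List.map_map]
  congr 1
  ext i
  simp [Function.comp, apply_ite f]

end altProd


section altProd2
variable {A : Type*} [Monoid A] (a b : A)
lemma altProd_succ_right_even {k : ℕ} (h : Even k) :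
    altProd a b (k+1) = altProd a b k * a := by rw [altProd_succ_right, if_pos h]
lemma altProd_succ_right_odd {k : ℕ} (h : ¬ Even k) :
    altProd a b (k+1) = altProd a b k * b := by rw [altProd_succ_right, if_neg h]
lemma map_altProd' {B : Type*} [Monoid B] {F' : Type*} [FunLike F' A B]
    [MonoidHomClass F' A B] (f : F') (k : ℕ) :
    f (altProd a b k) = altProd (f a) (f b) k := by
  induction k with
  | zero => simp
  | succ k ih =>
      rw [altProd_succ_right, map_mul, ih, altProd_succ_right, apply_ite f]
end altProd2


/-- The relations presenting the Hecke algebra with parameters `(0, q)` on an odd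
bond of weight `m`: generator `true` is `T_s`, generator `false` is `T_t`. -/
inductive HeckeRel (F : Type*) [Field F] (q : F) (m : ℕ) :
    FreeAlgebra F Bool → FreeAlgebra F Bool → Prop
  | quad_s : HeckeRel F q m (FreeAlgebra.ι F true * FreeAlgebra.ι F true) (FreeAlgebra.ι F true)
  | quad_t : HeckeRel F q m
      ((FreeAlgebra.ι F false - 1) * (FreeAlgebra.ι F false + algebraMap F (FreeAlgebra F Bool) q)) 0
  | braid : HeckeRel F q m (altProd (FreeAlgebra.ι F true) (FreeAlgebra.ι F false) m)
      (altProd (FreeAlgebra.ι F false) (FreeAlgebra.ι F true) m)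

/-- The presented algebra `A = ⟨T_s, T_t⟩`. -/
abbrev HeckeAlg (F : Type*) [Field F] (q : F) (m : ℕ) : Type _ := RingQuot (HeckeRel F q m)

/-- The generator `T_s` of `HeckeAlg`. -/
noncomputable def Tsgen (F : Type*) [Field F] (q : F) (m : ℕ) : HeckeAlg F q m :=
  RingQuot.mkAlgHom F (HeckeRel F q m) (FreeAlgebra.ι F true)

/-- The generator `T_t` of `HeckeAlg`. -/
noncomputable def Ttgen (F : Type*) [Field F] (q : F) (m : ℕ) : HeckeAlg F q m :=
  RingQuot.mkAlgHom F (HeckeRel F q m) (FreeAlgebra.ι F false)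

section AlgebraSide

variable {F : Type*} [Field F] {q : F}

lemma hecke_ss (m : ℕ) : Tsgen F q m * Tsgen F q m = Tsgen F q m := by
  have h := RingQuot.mkAlgHom_rel F (HeckeRel.quad_s (F := F) (q := q) (m := m))
  rw [map_mul] at h
  exact h

lemma hecke_tt (m : ℕ) :
    Ttgen F q m * Ttgen F q m
      = Ttgen F q m + q • (1 : HeckeAlg F q m) - q • Ttgen F q m := by
  have h := RingQuot.mkAlgHom_rel F (HeckeRel.quad_t (F := F) (q := q) (m := m))
  rw [map_mul, map_sub, map_one, map_add, AlgHom.commutes, map_zero] at h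
  rw [Algebra.algebraMap_eq_smul_one, sub_mul, mul_add, one_mul, mul_smul_comm, mul_one] at h
  rw [eq_sub_iff_add_eq]
  exact sub_eq_zero.mp h

lemma hecke_braid (m : ℕ) :
    altProd (Tsgen F q m) (Ttgen F q m) m = altProd (Ttgen F q m) (Tsgen F q m) m := by
  have h := RingQuot.mkAlgHom_rel F (HeckeRel.braid (F := F) (q := q) (m := m))
  rw [map_altProd', map_altProd'] at h
  exact h

-- left and right t-multiplication expansion
lemma hecke_tmul (m : ℕ) (x : HeckeAlg F q m) :
    Ttgen F q m * (Ttgen F q m * x)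
      = Ttgen F q m * x + q • x - q • (Ttgen F q m * x) := by
  rw [← mul_assoc, hecke_tt, sub_mul, add_mul, smul_mul_assoc, one_mul, smul_mul_assoc]

lemma hecke_mult (m : ℕ) (x : HeckeAlg F q m) :
    (x * Ttgen F q m) * Ttgen F q m
      = x * Ttgen F q m + q • x - q • (x * Ttgen F q m) := by
  rw [mul_assoc, hecke_tt, mul_sub, mul_add, mul_smul_comm, mul_one, mul_smul_comm]

lemma hecke_smul_cancel (hq : q ≠ 0) {m : ℕ} {x y : HeckeAlg F q m}
    (h : q • x = q • y) : x = y := by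
  have := congrArg (fun z => q⁻¹ • z) h
  simpa [smul_smul, inv_mul_cancel₀ hq] using this

lemma hecke_add_cancel {m : ℕ} {a x y : HeckeAlg F q m}
    (h : a + q • x - q • y = a) : q • x = q • y := by
  have h1 : a + (q • x - q • y) = a := by rw [← add_sub_assoc]; exact h
  have h2 := add_eq_left.mp h1
  exact sub_eq_zero.mp h2

lemma hecke_key (hq : q ≠ 0) (r : ℕ) :
    altProd (Tsgen F q (2*r+3)) (Ttgen F q (2*r+3)) (2*r+2)
        = altProd (Tsgen F q (2*r+3)) (Ttgen F q (2*r+3)) (2*r+1) ∧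
      altProd (Ttgen F q (2*r+3)) (Tsgen F q (2*r+3)) (2*r+2)
        = altProd (Tsgen F q (2*r+3)) (Ttgen F q (2*r+3)) (2*r+1) := by
  set s := Tsgen F q (2*r+3) with hsdef
  set t := Ttgen F q (2*r+3) with htdef
  have hev1 : Even (2*r+2) := ⟨r+1, by ring⟩
  have hev2 : ¬ Even (2*r+3) := by rintro ⟨c, hc⟩; omega
  have hb : altProd s t (2*r+3) = altProd t s (2*r+3) := hecke_braid (2*r+3)
  have hss : s * s = s := hecke_ss (2*r+3)
  have htm : ∀ x, t * (t * x) = t * x + q • x - q • (t * x) := hecke_tmul (2*r+3)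
  have hmt : ∀ x, (x * t) * t = x * t + q • x - q • (x * t) := hecke_mult (2*r+3)
  have D1 : altProd s t (2*r+4) = altProd s t (2*r+3) := by
    rw [altProd_succ_left s t (2*r+3), ← hb, altProd_succ_left s t (2*r+2), ← mul_assoc, hss,
      ← altProd_succ_left s t (2*r+2)]
  have D2 : altProd t s (2*r+4) = altProd t s (2*r+3) := by
    rw [altProd_succ_right_odd t s hev2, ← hb, altProd_succ_right_even s t hev1, mul_assoc, hss]
  have hi : altProd s t (2*r+2) = altProd t s (2*r+3) := by
    apply hecke_smul_cancel hq
    apply hecke_add_cancel (a := altProd t s (2*r+3))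
    have e1 : altProd t s (2*r+4) = t * (t * altProd s t (2*r+2)) := by
      rw [altProd_succ_left t s (2*r+3), hb, altProd_succ_left t s (2*r+2)]
    rw [htm, ← altProd_succ_left t s (2*r+2)] at e1
    rw [← e1, D2]
  have hii : altProd t s (2*r+2) = altProd t s (2*r+3) := by
    apply hecke_smul_cancel hq
    apply hecke_add_cancel (a := altProd t s (2*r+3))
    have e1 : altProd s t (2*r+4) = (altProd t s (2*r+2) * t) * t := by
      rw [altProd_succ_right_odd s t hev2, hb, altProd_succ_right_even t s hev1]
    rw [hmt, ← altProd_succ_right_even t s hev1] at e1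
    rw [← e1, D1, hb]
  have hiii : altProd s t (2*r+1) = altProd t s (2*r+3) := by
    apply hecke_smul_cancel hq
    apply hecke_add_cancel (a := altProd t s (2*r+3))
    have e1 : t * altProd t s (2*r+2)
        = altProd t s (2*r+2) + q • altProd s t (2*r+1) - q • altProd t s (2*r+2) := by
      rw [altProd_succ_left t s (2*r+1), htm, ← altProd_succ_left t s (2*r+1)]
    have e2 : t * altProd t s (2*r+2) = altProd t s (2*r+3) := by
      rw [hii, altProd_succ_left t s (2*r+2), htm, ← altProd_succ_left t s (2*r+2), ← hi]
      abel
    rw [e1, hii] at e2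
    exact e2
  exact ⟨hi.trans hiii.symm, hii.trans hiii.symm⟩

end AlgebraSide

/-- The set `{(T_s T_t ⋯)_k, (T_t T_s ⋯)_k : 0 ≤ k ≤ m-2}`. -/
def altSet (F : Type*) [Field F] (q : F) (m : ℕ) : Set (HeckeAlg F q m) :=
  {x | ∃ k ≤ m - 2, x = altProd (Tsgen F q m) (Ttgen F q m) k ∨
    x = altProd (Ttgen F q m) (Tsgen F q m) k}

section Span
variable {F : Type*} [Field F] {q : F}

lemma hecke_adjoin (m : ℕ) :
    Algebra.adjoin F {Tsgen F q m, Ttgen F q m} = ⊤ := by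
  have hsurj := RingQuot.mkAlgHom_surjective F (HeckeRel F q m)
  have h1 : Algebra.adjoin F
      (Set.range (fun b : Bool => RingQuot.mkAlgHom F (HeckeRel F q m) (FreeAlgebra.ι F b))) = ⊤ := by
    have := AlgHom.map_adjoin (RingQuot.mkAlgHom F (HeckeRel F q m))
      (Set.range (FreeAlgebra.ι F : Bool → FreeAlgebra F Bool))
    rw [FreeAlgebra.adjoin_range_ι, Algebra.map_top] at this
    rw [← Set.range_comp] at this
    rw [Function.comp_def] at this
    rw [← this, (AlgHom.range_eq_top _).mpr hsurj]
  have h2 : Set.range (fun b : Bool => RingQuot.mkAlgHom F (HeckeRel F q m) (FreeAlgebra.ι F b))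
      = {Tsgen F q m, Ttgen F q m} := by
    ext x
    constructor
    · rintro ⟨b, rfl⟩
      cases b
      · right; rfl
      · left; rfl
    · rintro (rfl | rfl)
      · exact ⟨true, rfl⟩
      · exact ⟨false, rfl⟩
  rwa [h2] at h1

lemma hecke_span (hq : q ≠ 0) (r : ℕ) :
    Submodule.span F (altSet F q (2*r+3)) = ⊤ := by
  set s := Tsgen F q (2*r+3) with hsdef
  set t := Ttgen F q (2*r+3) with htdef
  set P := Submodule.span F (altSet F q (2*r+3)) with hP
  have hss : s * s = s := hecke_ss (2*r+3)
  have htm : ∀ x, t * (t * x) = t * x + q • x - q • (t * x) := hecke_tmul (2*r+3)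
  obtain ⟨K1, K2⟩ := hecke_key (F := F) hq r
  have hm2 : (2*r+3) - 2 = 2*r+1 := by omega
  have hSmem : ∀ k, k ≤ 2*r+1 → altProd s t k ∈ altSet F q (2*r+3) := by
    intro k hk; exact ⟨k, by omega, Or.inl rfl⟩
  have hTmem : ∀ k, k ≤ 2*r+1 → altProd t s k ∈ altSet F q (2*r+3) := by
    intro k hk; exact ⟨k, by omega, Or.inr rfl⟩
  -- single-generator multiplication on elements of altSet
  have hmulS : ∀ x ∈ altSet F q (2*r+3), s * x ∈ P := by
    rintro x ⟨k, hk, h | h⟩ <;> subst h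
    · match k with
      | 0 => rw [altProd_zero, mul_one, ← altProd_one s t]
             exact Submodule.subset_span (hSmem 1 (by omega))
      | (j+1) =>
          rw [altProd_succ_left s t j, ← mul_assoc, hss, ← altProd_succ_left s t j]
          exact Submodule.subset_span (hSmem (j+1) (by omega))
    · rw [← altProd_succ_left s t k]
      by_cases hk' : k + 1 ≤ 2*r+1
      · exact Submodule.subset_span (hSmem (k+1) hk')
      · have : k = 2*r+1 := by omega
        subst this
        rw [show 2*r+1+1 = 2*r+2 by ring, K1]
        exact Submodule.subset_span (hSmem (2*r+1) (by omega))
  have hmulT : ∀ x ∈ altSet F q (2*r+3), t * x ∈ P := by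
    rintro x ⟨k, hk, h | h⟩ <;> subst h
    · rw [← altProd_succ_left t s k]
      by_cases hk' : k + 1 ≤ 2*r+1
      · exact Submodule.subset_span (hTmem (k+1) hk')
      · have : k = 2*r+1 := by omega
        subst this
        rw [show 2*r+1+1 = 2*r+2 by ring, K2]
        exact Submodule.subset_span (hSmem (2*r+1) (by omega))
    · match k with
      | 0 => rw [altProd_zero, mul_one, ← altProd_one t s]
             exact Submodule.subset_span (hTmem 1 (by omega))
      | (j+1) =>
          rw [altProd_succ_left t s j, htm, ← altProd_succ_left t s j]
          refine sub_mem (add_mem ?_ ?_) ?_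
          · exact Submodule.subset_span (hTmem (j+1) (by omega))
          · exact Submodule.smul_mem _ _ (Submodule.subset_span (hSmem j (by omega)))
          · exact Submodule.smul_mem _ _ (Submodule.subset_span (hTmem (j+1) (by omega)))
  have hmulSP : ∀ x ∈ P, s * x ∈ P := by
    intro x hx
    refine Submodule.span_induction (fun y hy => hmulS y hy) (by simp) ?_ ?_ hx
    · intro a b _ _ ha hb; rw [mul_add]; exact add_mem ha hb
    · intro c a _ ha; rw [mul_smul_comm]; exact Submodule.smul_mem _ _ ha
  have hmulTP : ∀ x ∈ P, t * x ∈ P := by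
    intro x hx
    refine Submodule.span_induction (fun y hy => hmulT y hy) (by simp) ?_ ?_ hx
    · intro a b _ _ ha hb; rw [mul_add]; exact add_mem ha hb
    · intro c a _ ha; rw [mul_smul_comm]; exact Submodule.smul_mem _ _ ha
  have hone : (1 : HeckeAlg F q (2*r+3)) ∈ P := by
    rw [← altProd_zero s t]
    exact Submodule.subset_span (hSmem 0 (by omega))
  have hclos : ∀ w ∈ Submonoid.closure {s, t}, ∀ x ∈ P, w * x ∈ P := by
    intro w hw
    induction hw using Submonoid.closure_induction with
    | mem y hy =>
        rcases hy with rfl | rfl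
        · exact fun x hx => hmulSP x hx
        · exact fun x hx => hmulTP x hx
    | one => intro x hx; rwa [one_mul]
    | mul a b _ _ ha hb => intro x hx; rw [mul_assoc]; exact ha _ (hb x hx)
  -- conclude
  rw [eq_top_iff]
  intro a _
  have hadj : a ∈ Subalgebra.toSubmodule (Algebra.adjoin F {s, t}) := by
    rw [hecke_adjoin]
    trivial
  rw [Algebra.adjoin_eq_span] at hadj
  refine Submodule.span_induction ?_ (by simp) ?_ ?_ hadj
  · intro y hy
    have := hclos y hy 1 hone
    rwa [mul_one] at this
  · intro a b _ _ ha hb; exact add_mem ha hb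
  · intro c a _ ha; exact Submodule.smul_mem _ _ ha

end Span


open Module

section Mod
variable (F : Type*) [Field F] (q : F) (p : ℕ)

abbrev HIdx (p : ℕ) := Fin (p+2) ⊕ Fin (p+1)

noncomputable def HBas : Basis (HIdx p) F (HIdx p → F) := Pi.basisFun F _

noncomputable def HSop : Module.End F (HIdx p → F) :=
  (HBas F p).constr F fun i =>
    match i with
    | Sum.inl k => if (k : ℕ) = 0 then HBas F p (Sum.inl ⟨1, by omega⟩) else HBas F p (Sum.inl k)
    | Sum.inr k => if h : (k : ℕ) = p then HBas F p (Sum.inl ⟨p+1, by omega⟩)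
        else HBas F p (Sum.inl ⟨(k : ℕ)+2, by have := k.isLt; omega⟩)

noncomputable def HTop : Module.End F (HIdx p → F) :=
  (HBas F p).constr F fun i =>
    match i with
    | Sum.inl k => if h : (k : ℕ) = p+1 then HBas F p (Sum.inl k)
        else HBas F p (Sum.inr ⟨(k : ℕ), by have := k.isLt; omega⟩)
    | Sum.inr k => (1-q) • HBas F p (Sum.inr k) + q • HBas F p (Sum.inl ⟨(k : ℕ), by omega⟩)

variable {F q p}

lemma HSop_inl (k : Fin (p+2)) :
    HSop F p (HBas F p (Sum.inl k)) =
      if (k : ℕ) = 0 then HBas F p (Sum.inl ⟨1, by omega⟩) else HBas F p (Sum.inl k) := by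
  rw [HSop, Basis.constr_basis]

lemma HSop_inr (k : Fin (p+1)) :
    HSop F p (HBas F p (Sum.inr k)) =
      if h : (k : ℕ) = p then HBas F p (Sum.inl ⟨p+1, by omega⟩)
        else HBas F p (Sum.inl ⟨(k : ℕ)+2, by have := k.isLt; omega⟩) := by
  rw [HSop, Basis.constr_basis]

lemma HTop_inl (k : Fin (p+2)) :
    HTop F q p (HBas F p (Sum.inl k)) =
      if h : (k : ℕ) = p+1 then HBas F p (Sum.inl k)
        else HBas F p (Sum.inr ⟨(k : ℕ), by have := k.isLt; omega⟩) := by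
  rw [HTop, Basis.constr_basis]

lemma HTop_inr (k : Fin (p+1)) :
    HTop F q p (HBas F p (Sum.inr k)) =
      (1-q) • HBas F p (Sum.inr k) + q • HBas F p (Sum.inl ⟨(k : ℕ), by omega⟩) := by
  rw [HTop, Basis.constr_basis]

lemma HSop_sq : HSop F p * HSop F p = HSop F p := by
  refine (HBas F p).ext fun i => ?_
  rw [Module.End.mul_apply]
  match i with
  | Sum.inl k =>
      rw [HSop_inl]
      by_cases h : (k : ℕ) = 0 <;> simp only [h, if_true, if_false, HSop_inl] <;> simp [h]
  | Sum.inr k =>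
      rw [HSop_inr]
      split_ifs with h <;> rw [HSop_inl] <;> simp

lemma HTop_rel :
    (HTop F q p - 1) * (HTop F q p + algebraMap F (Module.End F (HIdx p → F)) q) = 0 := by
  have h2 : HTop F q p * HTop F q p = (1-q) • HTop F q p + q • (1 : Module.End F (HIdx p → F)) := by
    refine (HBas F p).ext fun i => ?_
    rw [Module.End.mul_apply]
    match i with
    | Sum.inl k =>
        rw [HTop_inl]
        by_cases h : (k : ℕ) = p+1
        · rw [dif_pos h, HTop_inl, dif_pos h, LinearMap.add_apply, LinearMap.smul_apply,
            LinearMap.smul_apply, HTop_inl, dif_pos h, Module.End.one_apply]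
          module
        · rw [dif_neg h, HTop_inr, LinearMap.add_apply, LinearMap.smul_apply,
            LinearMap.smul_apply, HTop_inl, dif_neg h, Module.End.one_apply]
    | Sum.inr k =>
        rw [HTop_inr, map_add, map_smul, map_smul, HTop_inr, HTop_inl]
        rw [LinearMap.add_apply, LinearMap.smul_apply, LinearMap.smul_apply, HTop_inr,
          Module.End.one_apply]
        have : ((⟨(k:ℕ), by omega⟩ : Fin (p+2)) : ℕ) ≠ p+1 := by have := k.isLt; simp; omega
        rw [dif_neg this]
  rw [Module.algebraMap_end_eq_smul_id, ← Module.End.one_eq_id, sub_mul, mul_add, mul_add, h2]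
  simp only [mul_smul_comm, one_mul, mul_one]
  module

end Mod

section Pow
variable {F : Type*} [Field F] {q : F} {p : ℕ}

lemma HSop_a0 (h : (0:ℕ) < p+2) :
    HSop F p (HBas F p (Sum.inl ⟨0, h⟩)) = HBas F p (Sum.inl ⟨1, by omega⟩) := by
  rw [HSop_inl]; simp

lemma HSop_a (k : ℕ) (h1 : 1 ≤ k) (hk : k < p+2) :
    HSop F p (HBas F p (Sum.inl ⟨k, hk⟩)) = HBas F p (Sum.inl ⟨k, hk⟩) := by
  rw [HSop_inl, if_neg (by simp; omega)]

lemma HSop_b (k : ℕ) (hk : k < p) :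
    HSop F p (HBas F p (Sum.inr ⟨k, by omega⟩)) = HBas F p (Sum.inl ⟨k+2, by omega⟩) := by
  rw [HSop_inr, dif_neg (by simp; omega)]

lemma HSop_bp (h : p < p+1) :
    HSop F p (HBas F p (Sum.inr ⟨p, h⟩)) = HBas F p (Sum.inl ⟨p+1, by omega⟩) := by
  rw [HSop_inr, dif_pos (by simp)]

lemma HTop_a (k : ℕ) (hk : k ≤ p) :
    HTop F q p (HBas F p (Sum.inl ⟨k, by omega⟩)) = HBas F p (Sum.inr ⟨k, by omega⟩) := by
  rw [HTop_inl, dif_neg (by simp; omega)]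

lemma HTop_ap (h : p+1 < p+2) :
    HTop F q p (HBas F p (Sum.inl ⟨p+1, h⟩)) = HBas F p (Sum.inl ⟨p+1, h⟩) := by
  rw [HTop_inl, dif_pos (by simp)]

lemma HTop_b (k : ℕ) (hk : k < p+1) :
    HTop F q p (HBas F p (Sum.inr ⟨k, hk⟩)) =
      (1-q) • HBas F p (Sum.inr ⟨k, hk⟩) + q • HBas F p (Sum.inl ⟨k, by omega⟩) := by
  rw [HTop_inr]

lemma HP_apply (v : HIdx p → F) :
    (HSop F p * HTop F q p) v = HSop F p (HTop F q p v) := rfl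

lemma HP_pow_succ (i : ℕ) (v : HIdx p → F) :
    ((HSop F p * HTop F q p) ^ (i+1)) v
      = ((HSop F p * HTop F q p) ^ i) (HSop F p (HTop F q p v)) := by
  rw [pow_succ, Module.End.mul_apply, HP_apply]

lemma HP_top (i : ℕ) :
    ((HSop F p * HTop F q p) ^ i) (HBas F p (Sum.inl ⟨p+1, by omega⟩))
      = HBas F p (Sum.inl ⟨p+1, by omega⟩) := by
  induction i with
  | zero => simp
  | succ i ih => rw [HP_pow_succ, HTop_ap, HSop_a (p+1) (by omega) (by omega), ih]

lemma HP_L1 (i k : ℕ) (hk : k ≤ p+1) (h : p+1-k ≤ 2*i) :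
    ((HSop F p * HTop F q p) ^ i) (HBas F p (Sum.inl ⟨k, by omega⟩))
      = HBas F p (Sum.inl ⟨p+1, by omega⟩) := by
  induction i generalizing k with
  | zero =>
      have : k = p+1 := by omega
      subst this
      simp
  | succ i ih =>
      by_cases h1 : k = p+1
      · subst h1
        rw [HP_pow_succ, HTop_ap, HSop_a (p+1) (by omega) (by omega), HP_top]
      · rw [HP_pow_succ, HTop_a k (by omega)]
        by_cases h2 : k = p
        · subst h2
          rw [HSop_bp, HP_top]
        · rw [HSop_b k (by omega)]
          exact ih (k+2) (by omega) (by omega)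

lemma HP_L2a (i : ℕ) (h : p+2 ≤ 2*i) :
    ((HSop F p * HTop F q p) ^ i) (HBas F p (Sum.inr ⟨0, by omega⟩))
      = HBas F p (Sum.inl ⟨p+1, by omega⟩) := by
  obtain ⟨i, rfl⟩ : ∃ j, i = j + 1 := ⟨i - 1, by omega⟩
  rw [HP_pow_succ, HTop_b 0 (by omega), map_add, map_smul, map_smul]
  by_cases hp : p = 0
  · subst hp
    rw [HSop_bp, HSop_a0, map_add, map_smul, map_smul, HP_top, ← add_smul]
    norm_num
  · rw [HSop_b 0 (by omega), HSop_a0, map_add, map_smul, map_smul,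
      HP_L1 i 2 (by omega) (by omega), HP_L1 i 1 (by omega) (by omega), ← add_smul]
    norm_num

lemma HP_L2b (i k : ℕ) (h1 : 1 ≤ k) (hk : k ≤ p) (h : p+3-k ≤ 2*i) :
    ((HSop F p * HTop F q p) ^ i) (HBas F p (Sum.inr ⟨k, by omega⟩))
      = HBas F p (Sum.inl ⟨p+1, by omega⟩) := by
  obtain ⟨i, rfl⟩ : ∃ j, i = j + 1 := ⟨i - 1, by omega⟩
  rw [HP_pow_succ, HTop_b k (by omega), map_add, map_smul, map_smul]
  by_cases h2 : k = p
  · subst h2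
    rw [HSop_bp, HSop_a k (by omega) (by omega), map_add, map_smul, map_smul, HP_top,
      HP_L1 i k (by omega) (by omega), ← add_smul]
    norm_num
  · rw [HSop_b k (by omega), HSop_a k (by omega) (by omega), map_add, map_smul, map_smul,
      HP_L1 i (k+2) (by omega) (by omega), HP_L1 i k (by omega) (by omega), ← add_smul]
    norm_num

end Pow

section Braid
variable {F : Type*} [Field F] {q : F} {p r : ℕ}

lemma braid_op (hp : p = 2*r) :
    altProd (HSop F p) (HTop F q p) (p+3) = altProd (HTop F q p) (HSop F p) (p+3) := by
  subst hp
  have hm : 2*r+3 = 2*(r+1)+1 := by ring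
  rw [hm, altProd_two_mul_add_one, altProd_odd_swap]
  refine (HBas F (2*r)).ext fun i => ?_
  rw [Module.End.mul_apply, Module.End.mul_apply]
  have key1 : ∀ k : ℕ, ∀ hk : k < 2*r+2, 1 ≤ k →
      ((HSop F (2*r) * HTop F q (2*r)) ^ (r+1)) (HBas F (2*r) (Sum.inl ⟨k, hk⟩))
        = HBas F (2*r) (Sum.inl ⟨2*r+1, by omega⟩) := by
    intro k hk h1
    exact HP_L1 (r+1) k (by omega) (by omega)
  have key2 :
      ((HSop F (2*r) * HTop F q (2*r)) ^ (r+1)) (HBas F (2*r) i)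
        = HBas F (2*r) (Sum.inl ⟨2*r+1, by omega⟩) := by
    match i with
    | Sum.inl k => exact HP_L1 (r+1) k (by omega) (by omega)
    | Sum.inr k =>
        by_cases h0 : (k : ℕ) = 0
        · have : k = ⟨0, by omega⟩ := Fin.ext h0
          rw [this]
          exact HP_L2a (r+1) (by omega)
        · have : k = ⟨(k:ℕ), k.isLt⟩ := Fin.ext rfl
          rw [this]
          exact HP_L2b (r+1) k (by omega) (by omega) (by omega)
  rw [key2, HTop_ap]
  match i with
  | Sum.inl k =>
      by_cases h0 : (k : ℕ) = 0
      · have : k = ⟨0, by omega⟩ := Fin.ext h0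
        rw [this, HSop_a0]
        exact key1 1 (by omega) (by omega)
      · have : k = ⟨(k:ℕ), k.isLt⟩ := Fin.ext rfl
        rw [this, HSop_a k (by omega) (by omega)]
        exact key1 k (by omega) (by omega)
  | Sum.inr k =>
      by_cases h0 : (k : ℕ) = 2*r
      · have : k = ⟨2*r, by omega⟩ := Fin.ext h0
        rw [this, HSop_bp]
        exact key1 (2*r+1) (by omega) (by omega)
      · have : k = ⟨(k:ℕ), k.isLt⟩ := Fin.ext rfl
        rw [this, HSop_b k (by omega)]
        exact key1 ((k:ℕ)+2) (by omega) (by omega)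

end Braid

section Glue
variable {F : Type*} [Field F] {q : F} {p : ℕ}

lemma altOp_base (k : ℕ) (hk : k ≤ p+1) :
    (altProd (HSop F p) (HTop F q p) k) (HBas F p (Sum.inl ⟨0, by omega⟩))
        = HBas F p (Sum.inl ⟨k, by omega⟩) ∧
      (1 ≤ k → (altProd (HTop F q p) (HSop F p) k) (HBas F p (Sum.inl ⟨0, by omega⟩))
        = HBas F p (Sum.inr ⟨k-1, by omega⟩)) := by
  induction k with
  | zero =>
      refine ⟨?_, by omega⟩
      rw [altProd_zero]
      rfl
  | succ k ih =>
      obtain ⟨ih1, ih2⟩ := ih (by omega)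
      constructor
      · rw [altProd_succ_left, Module.End.mul_apply]
        obtain _ | j := k
        · rw [altProd_zero, Module.End.one_apply, HSop_a0]
        · rw [ih2 (by omega)]
          have hj : (j+1-1 : ℕ) = j := by omega
          rw [show (⟨j+1-1, by omega⟩ : Fin (p+1)) = ⟨j, by omega⟩ from Fin.ext hj]
          rw [HSop_b j (by omega)]
      · intro _
        rw [altProd_succ_left, Module.End.mul_apply, ih1, HTop_a k (by omega)]
        have hj : (k+1-1 : ℕ) = k := by omega
        rw [show (⟨k+1-1, by omega⟩ : Fin (p+1)) = ⟨k, by omega⟩ from Fin.ext hj]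

end Glue

section Main
variable (F : Type*) [Field F] (q : F) (r : ℕ)

noncomputable def heckeφ : HeckeAlg F q (2*r+3) →ₐ[F] Module.End F (HIdx (2*r) → F) :=
  RingQuot.liftAlgHom F ⟨FreeAlgebra.lift F (fun b => if b then HSop F (2*r) else HTop F q (2*r)),
    by
      rintro x y h
      induction h with
      | quad_s =>
          rw [map_mul, FreeAlgebra.lift_ι_apply, if_pos rfl]
          exact HSop_sq
      | quad_t =>
          rw [map_mul, map_sub, map_one, map_add, AlgHom.commutes, map_zero,
            FreeAlgebra.lift_ι_apply, if_neg (by simp)]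
          exact HTop_rel
      | braid =>
          rw [map_altProd', map_altProd', FreeAlgebra.lift_ι_apply, FreeAlgebra.lift_ι_apply,
            if_pos rfl, if_neg (by simp)]
          exact braid_op rfl⟩

lemma heckeφ_s : heckeφ F q r (Tsgen F q (2*r+3)) = HSop F (2*r) := by
  rw [Tsgen, heckeφ, RingQuot.liftAlgHom_mkAlgHom_apply, FreeAlgebra.lift_ι_apply, if_pos rfl]

lemma heckeφ_t : heckeφ F q r (Ttgen F q (2*r+3)) = HTop F q (2*r) := by
  rw [Ttgen, heckeφ, RingQuot.liftAlgHom_mkAlgHom_apply, FreeAlgebra.lift_ι_apply,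
    if_neg (by simp)]

noncomputable def heckeEv : HeckeAlg F q (2*r+3) →ₗ[F] (HIdx (2*r) → F) where
  toFun a := heckeφ F q r a (HBas F (2*r) (Sum.inl ⟨0, by omega⟩))
  map_add' a b := by rw [map_add]; rfl
  map_smul' c a := by rw [map_smul]; rfl

noncomputable def heckeψ : (HIdx (2*r) → F) →ₗ[F] HeckeAlg F q (2*r+3) :=
  (HBas F (2*r)).constr F fun i =>
    match i with
    | Sum.inl k => altProd (Tsgen F q (2*r+3)) (Ttgen F q (2*r+3)) (k : ℕ)
    | Sum.inr k => altProd (Ttgen F q (2*r+3)) (Tsgen F q (2*r+3)) ((k : ℕ)+1)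

lemma heckeEv_altS (k : ℕ) (hk : k ≤ 2*r+1) :
    heckeEv F q r (altProd (Tsgen F q (2*r+3)) (Ttgen F q (2*r+3)) k)
      = HBas F (2*r) (Sum.inl ⟨k, by omega⟩) := by
  show heckeφ F q r _ _ = _
  rw [map_altProd', heckeφ_s, heckeφ_t]
  exact (altOp_base k (by omega)).1

lemma heckeEv_altT (k : ℕ) (h1 : 1 ≤ k) (hk : k ≤ 2*r+1) :
    heckeEv F q r (altProd (Ttgen F q (2*r+3)) (Tsgen F q (2*r+3)) k)
      = HBas F (2*r) (Sum.inr ⟨k-1, by omega⟩) := by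
  show heckeφ F q r _ _ = _
  rw [map_altProd', heckeφ_s, heckeφ_t]
  exact (altOp_base k (by omega)).2 h1

lemma heckeEv_ψ : ∀ u, heckeEv F q r (heckeψ F q r u) = u := by
  have h : (heckeEv F q r).comp (heckeψ F q r) = LinearMap.id := by
    refine (HBas F (2*r)).ext fun i => ?_
    rw [LinearMap.comp_apply, LinearMap.id_apply, heckeψ, Basis.constr_basis]
    match i with
    | Sum.inl k =>
        rw [heckeEv_altS F q r (k : ℕ) (by omega)]
    | Sum.inr k =>
        rw [heckeEv_altT F q r ((k : ℕ)+1) (by omega) (by omega)]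
        have h : (⟨(k:ℕ)+1-1, by omega⟩ : Fin (2*r+1)) = k := Fin.ext (by simp)
        rw [h]
  intro u
  have := congrArg (fun f => f u) h
  simpa using this

end Main

theorem heckeAux (F : Type*) [Field F] (q : F) (hq : q ≠ 0) (r : ℕ) :
    Module.finrank F (HeckeAlg F q (2*r+3)) = 2*(2*r+3) - 3 ∧
      LinearIndependent F ((↑) : altSet F q (2*r+3) → HeckeAlg F q (2*r+3)) ∧
      Submodule.span F (altSet F q (2*r+3)) = ⊤ := by
  have hspan := hecke_span (F := F) (q := q) hq r
  have hsurj : LinearMap.range (heckeψ F q r) = ⊤ := by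
    rw [← top_le_iff, ← hspan, Submodule.span_le]
    rintro x ⟨k, hk, h | h⟩
    · exact ⟨HBas F (2*r) (Sum.inl ⟨k, by omega⟩),
        by rw [heckeψ, Basis.constr_basis]; exact h.symm⟩
    · obtain _ | j := k
      · refine ⟨HBas F (2*r) (Sum.inl ⟨0, by omega⟩), ?_⟩
        rw [heckeψ, Basis.constr_basis, h]
        rfl
      · exact ⟨HBas F (2*r) (Sum.inr ⟨j, by omega⟩),
          by rw [heckeψ, Basis.constr_basis]; exact h.symm⟩
  have hlinv := heckeEv_ψ F q r
  have hinj : Function.Injective (heckeψ F q r) := Function.LeftInverse.injective hlinv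
  have hbij : Function.Bijective (heckeψ F q r) := ⟨hinj, LinearMap.range_eq_top.mp hsurj⟩
  let e : (HIdx (2*r) → F) ≃ₗ[F] HeckeAlg F q (2*r+3) := LinearEquiv.ofBijective _ hbij
  refine ⟨?_, ?_, hspan⟩
  · rw [← e.finrank_eq, Module.finrank_eq_card_basis (HBas F (2*r))]
    simp only [HIdx, Fintype.card_sum, Fintype.card_fin]
    omega
  · have hrep : ∀ x : altSet F q (2*r+3), ∃ i : HIdx (2*r),
        (x : HeckeAlg F q (2*r+3)) = heckeψ F q r (HBas F (2*r) i) := by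
      rintro ⟨x, k, hk, h | h⟩
      · exact ⟨Sum.inl ⟨k, by omega⟩, by rw [heckeψ, Basis.constr_basis]; exact h⟩
      · obtain _ | j := k
        · refine ⟨Sum.inl ⟨0, by omega⟩, ?_⟩
          rw [heckeψ, Basis.constr_basis]
          exact h.trans (by rfl)
        · exact ⟨Sum.inr ⟨j, by omega⟩, by rw [heckeψ, Basis.constr_basis]; exact h⟩
    choose jf hjf using hrep
    have hjinj : Function.Injective jf := by
      intro x y hxy
      apply Subtype.ext
      rw [hjf x, hjf y, hxy]
    have hli : LinearIndependent F (⇑(HBas F (2*r)) ∘ jf) :=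
      (HBas F (2*r)).linearIndependent.comp jf hjinj
    have hcomp : (fun x : altSet F q (2*r+3) => heckeEv F q r (x : HeckeAlg F q (2*r+3)))
        = ⇑(HBas F (2*r)) ∘ jf := by
      funext x
      rw [Function.comp_apply, hjf x, hlinv]
    rw [← hcomp] at hli
    exact LinearIndependent.of_comp (heckeEv F q r) hli

/-- For odd `m ≥ 3` and `q ≠ 0`, the algebra generated by `T_s, T_t` with
`T_s² = T_s`, `(T_t−1)(T_t+q) = 0` and the braid relation of length `m` has
dimension `2m − 3`, with basis the alternating products
`(T_s T_t ⋯)_k, (T_t T_s ⋯)_k` for `0 ≤ k ≤ m−2`. -/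
theorem heckeAlg_dim_eq (F : Type*) [Field F] (q : F) (hq : q ≠ 0)
    (m : ℕ) (hm : 3 ≤ m) (hodd : Odd m) :
    Module.finrank F (HeckeAlg F q m) = 2 * m - 3 ∧
      LinearIndependent F ((↑) : altSet F q m → HeckeAlg F q m) ∧
      Submodule.span F (altSet F q m) = ⊤ := by
  obtain ⟨r, rfl⟩ : ∃ r, m = 2*r+3 := by
    obtain ⟨l, hl⟩ := hodd
    exact ⟨l-1, by omega⟩
  exact heckeAux F q hq r
end

section
/- Define for compositions α of m and β of n the product α ⊗̂ β in the free ℤ-module Comp on all compositions by α ⊗̂ β = αβ + α▷β (concatenation plus near-concatenation), and the coproduct Δ(α) = Σ_{i=0}^{m} α_{≤i} ⊗ α_{>i}. Then the map S sending each composition α of n to (−1)^n α^c, where α^c is the complementary composition (with D(α^c) = {1,...,n−1}\D(α)), is a two-sided antipode: Σ_{i=0}^{n} S(α_{≤i}) ⊗̂ α_{>i} = u∘ε(α) = Σ_{i=0}^{n} α_{≤i} ⊗̂ S(α_{>i}) for every composition α. -/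
/-- The descent set of a composition (a list of positive parts): the set of
partial sums of proper nonempty prefixes. -/
def descents (α : List ℕ) : Finset ℕ :=
  ((Finset.range α.length).filter (fun i => 0 < i)).image (fun i => (α.take i).sum)

/-- The composition of `n` whose descent set is `s ∩ {1,...,n-1}`. -/
def fromDescents (n : ℕ) (s : Finset ℕ) : List ℕ :=
  if n = 0 then []
  else
    let l := ((s.filter (fun x => 0 < x ∧ x < n)).sort (· ≤ ·)) ++ [n]
    (List.zip (0 :: l) l).map (fun p => p.2 - p.1)

/-- The complementary composition `α^c`, with `D(α^c) = {1,...,n-1} \ D(α)`. -/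
def complComp (α : List ℕ) : List ℕ :=
  fromDescents α.sum ((Finset.Icc 1 (α.sum - 1)) \ descents α)

/-- The composition `α_{≤i}`. -/
def restrLe (α : List ℕ) (i : ℕ) : List ℕ := fromDescents i (descents α)

/-- The composition `α_{>i}`. -/
def restrGt (α : List ℕ) (i : ℕ) : List ℕ :=
  fromDescents (α.sum - i) ((descents α).image (fun d => d - i))

/-- The near-concatenation `α▷β`. -/
def nearConcat (α β : List ℕ) : List ℕ :=
  if α = [] then β
  else if β = [] then α
  else α.dropLast ++ ((α.getLast! + β.head!) :: β.tail)

/-- The product `α ⊗̂ β = αβ + α▷β` (with the empty composition acting as unit)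
in the free `ℤ`-module on compositions. -/
noncomputable def hatMul (α β : List ℕ) : List ℕ →₀ ℤ :=
  if α = [] ∨ β = [] then Finsupp.single (α ++ β) 1
  else Finsupp.single (α ++ β) 1 + Finsupp.single (nearConcat α β) 1

def dfrom : ℕ → List ℕ → List ℕ
  | _, [] => []
  | p, b :: m => (b - p) :: dfrom b m

lemma zip_map_eq_dfrom (p : ℕ) (l : List ℕ) :
    ((p :: l).zip l).map (fun q => q.2 - q.1) = dfrom p l := by
  induction l generalizing p with
  | nil => rfl
  | cons b t ih => simp only [List.zip_cons_cons, List.map_cons, dfrom, ih]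

lemma fromDescents_eq_dfrom {n : ℕ} (hn : n ≠ 0) (s : Finset ℕ) :
    fromDescents n s = dfrom 0 ((s.filter (fun x => 0 < x ∧ x < n)).sort (· ≤ ·) ++ [n]) := by
  rw [fromDescents, if_neg hn]
  exact zip_map_eq_dfrom _ _

lemma dfrom_length (p : ℕ) (m : List ℕ) : (dfrom p m).length = m.length := by
  induction m generalizing p with
  | nil => rfl
  | cons b t ih => simp [dfrom, ih]

lemma getLastD_cons' (b p : ℕ) (t : List ℕ) : (b :: t).getLastD p = t.getLastD b := by
  cases t <;> rfl

lemma dfrom_append (p : ℕ) (m₁ m₂ : List ℕ) :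
    dfrom p (m₁ ++ m₂) = dfrom p m₁ ++ dfrom (m₁.getLastD p) m₂ := by
  induction m₁ generalizing p with
  | nil => simp [dfrom]
  | cons b t ih =>
    rw [List.cons_append]
    show (b - p) :: dfrom b (t ++ m₂) = ((b - p) :: dfrom b t) ++ _
    rw [ih, getLastD_cons', List.cons_append]

lemma dfrom_map_add (p a : ℕ) (m : List ℕ) :
    dfrom (p + a) (m.map (· + a)) = dfrom p m := by
  induction m generalizing p with
  | nil => rfl
  | cons b t ih => simp [dfrom, ih, Nat.add_sub_add_right]

lemma chain_le_getLastD {p : ℕ} {m : List ℕ} (h : List.Chain (· ≤ ·) p m) :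
    p ≤ m.getLastD p := by
  induction m generalizing p with
  | nil => simp
  | cons b t ih =>
    rcases List.chain_cons.1 h with ⟨h1, h2⟩
    rw [getLastD_cons']
    exact le_trans h1 (le_trans (ih h2) (le_of_eq rfl))

lemma dfrom_sum {p : ℕ} {m : List ℕ} (h : List.Chain (· ≤ ·) p m) :
    (dfrom p m).sum = m.getLastD p - p := by
  induction m generalizing p with
  | nil => simp [dfrom]
  | cons b t ih =>
    rcases List.chain_cons.1 h with ⟨h1, h2⟩
    have := chain_le_getLastD h2
    rw [getLastD_cons']
    simp only [dfrom, List.sum_cons, ih h2]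
    omega

lemma dfrom_take (p : ℕ) (m : List ℕ) (k : ℕ) :
    (dfrom p m).take k = dfrom p (m.take k) := by
  induction m generalizing p k with
  | nil => simp [dfrom]
  | cons b t ih =>
    cases k with
    | zero => simp [dfrom]
    | succ k => simp [dfrom, ih]

lemma mem_sortFilter {n x : ℕ} {s : Finset ℕ}
    (hx : x ∈ (s.filter (fun x => 0 < x ∧ x < n)).sort (· ≤ ·)) : 0 < x ∧ x < n := by
  have := Finset.mem_sort (α := ℕ) (· ≤ ·) |>.1 hx
  exact (Finset.mem_filter.1 this).2

lemma sorted_chain {n : ℕ} (hn : n ≠ 0) (s : Finset ℕ) :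
    List.Chain (· < ·) 0 ((s.filter (fun x => 0 < x ∧ x < n)).sort (· ≤ ·) ++ [n]) := by
  show List.IsChain (· < ·) (0 :: _)
  rw [List.isChain_iff_pairwise]
  have hs := (Finset.sortedLT_sort (s.filter (fun x => 0 < x ∧ x < n))).pairwise
  refine List.pairwise_cons.2 ⟨?_, ?_⟩
  · intro y hy
    rcases List.mem_append.1 hy with hy | hy
    · exact (mem_sortFilter hy).1
    · simp at hy; omega
  · refine List.pairwise_append.2 ⟨hs, by simp, ?_⟩
    intro x hx y hy
    simp at hy; subst hy
    exact (mem_sortFilter hx).2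

lemma dfrom_take_sum {p : ℕ} {m : List ℕ} (h : List.Chain (· ≤ ·) p m) {i : ℕ}
    (hi : i < m.length) : ((dfrom p m).take (i+1)).sum + p = m.getD i 0 := by
  induction m generalizing p i with
  | nil => simp at hi
  | cons b t ih =>
    rcases List.chain_cons.1 h with ⟨h1, h2⟩
    cases i with
    | zero => simp [dfrom]; omega
    | succ j =>
      have hj : j < t.length := by simpa using hi
      have := ih h2 (p := b) (i := j) hj
      simp only [dfrom, List.take_succ_cons, List.sum_cons, List.getD_cons_succ]
      omega

lemma descents_dfrom {m : List ℕ} (h : List.Chain (· < ·) 0 m) :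
    descents (dfrom 0 m) = m.dropLast.toFinset := by
  have h' : List.Chain (· ≤ ·) 0 m := List.Chain.imp (fun a b => le_of_lt) h
  ext x
  simp only [descents, Finset.mem_image, Finset.mem_filter, Finset.mem_range,
    List.mem_toFinset, dfrom_length]
  constructor
  · rintro ⟨i, ⟨hi, hpos⟩, rfl⟩
    obtain ⟨j, rfl⟩ : ∃ j, i = j + 1 := ⟨i - 1, by omega⟩
    have hj : j < m.length := by omega
    have hsum := dfrom_take_sum h' hj
    rw [List.mem_iff_getElem]
    have hjd : j < m.dropLast.length := by
      rw [List.length_dropLast]; omega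
    exact ⟨j, hjd, by rw [List.getElem_dropLast]; rw [List.getD_eq_getElem _ _ hj] at hsum; omega⟩
  · intro hx
    rw [List.mem_iff_getElem] at hx
    obtain ⟨j, hj, rfl⟩ := hx
    have hj' : j < m.length := by
      have := hj; rw [List.length_dropLast] at this; omega
    refine ⟨j + 1, ⟨by rw [List.length_dropLast] at hj; omega, by omega⟩, ?_⟩
    have hsum := dfrom_take_sum h' hj'
    rw [List.getD_eq_getElem _ _ hj'] at hsum
    rw [List.getElem_dropLast]
    omega

lemma getLast!_concat' (x : ℕ) (g : List ℕ) : (g ++ [x]).getLast! = x := by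
  have h2 : (g ++ [x]).getLast? = some x := List.getLast?_concat
  rw [List.getLast!.eq_def]
  split
  · simp_all
  · next a as heq =>
    rw [heq, List.getLast?_eq_getLast (l := a :: as) (by simp)] at h2
    exact Option.some_injective _ h2

lemma nearConcat_eq (g : List ℕ) (x y : ℕ) (d : List ℕ) :
    nearConcat (g ++ [x]) (y :: d) = g ++ (x + y) :: d := by
  rw [nearConcat, if_neg (by simp), if_neg (by simp), List.dropLast_concat,
    getLast!_concat']
  rfl

lemma getLastD_le {l : List ℕ} {d a : ℕ} (hd : d ≤ a) (h : ∀ x ∈ l, x ≤ a) :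
    l.getLastD d ≤ a := by
  induction l generalizing d with
  | nil => exact hd
  | cons b t ih =>
    rw [getLastD_cons']
    exact ih (h b List.mem_cons_self) (fun x hx => h x (List.mem_cons_of_mem _ hx))

lemma fromDescents_sum (n : ℕ) (s : Finset ℕ) : (fromDescents n s).sum = n := by
  rcases eq_or_ne n 0 with rfl | hn
  · simp [fromDescents]
  · rw [fromDescents_eq_dfrom hn,
      dfrom_sum (List.IsChain.imp (fun _ _ h => le_of_lt h) (sorted_chain hn s)), List.getLastD_concat]
    omega

lemma fromDescents_ne_nil {n : ℕ} (hn : n ≠ 0) (s : Finset ℕ) : fromDescents n s ≠ [] := by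
  rw [fromDescents_eq_dfrom hn]
  intro h
  have := congrArg List.length h
  simp [dfrom_length] at this

lemma descents_fromDescents {n : ℕ} (hn : n ≠ 0) (s : Finset ℕ) :
    descents (fromDescents n s) = s.filter (fun x => 0 < x ∧ x < n) := by
  rw [fromDescents_eq_dfrom hn, descents_dfrom (sorted_chain hn s),
    List.dropLast_concat, Finset.sort_toFinset]

lemma fromDescents_congr {n : ℕ} {s t : Finset ℕ}
    (h : s.filter (fun x => 0 < x ∧ x < n) = t.filter (fun x => 0 < x ∧ x < n)) :
    fromDescents n s = fromDescents n t := by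
  unfold fromDescents; rw [h]

lemma complComp_fromDescents {n : ℕ} (hn : n ≠ 0) (s : Finset ℕ) :
    complComp (fromDescents n s) = fromDescents n (Finset.Icc 1 (n-1) \ s) := by
  rw [complComp, fromDescents_sum, descents_fromDescents hn]
  apply fromDescents_congr
  ext x
  simp only [Finset.mem_filter, Finset.mem_sdiff, Finset.mem_Icc]
  by_cases hx : x ∈ s <;> simp [hx]

lemma sort_eq_of_sorted {F : Finset ℕ} {L : List ℕ} (h1 : L.Pairwise (· < ·))
    (h2 : L.toFinset = F) : F.sort (· ≤ ·) = L := by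
  refine List.Perm.eq_of_pairwise' (Finset.pairwise_sort _ _) (h1.imp fun h => le_of_lt h) ?_
  exact List.perm_of_nodup_nodup_toFinset_eq (Finset.sort_nodup _ _) h1.nodup
    (by rw [Finset.sort_toFinset, h2])

lemma sort_union_shift {a : ℕ} (A B : Finset ℕ)
    (hA : ∀ x ∈ A, 0 < x ∧ x < a) (hB : ∀ x ∈ B, 0 < x) :
    (A ∪ {a} ∪ B.image (· + a)).sort (· ≤ ·)
      = A.sort (· ≤ ·) ++ a :: (B.sort (· ≤ ·)).map (· + a) := by
  apply sort_eq_of_sorted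
  · rw [List.pairwise_append]
    refine ⟨(Finset.sortedLT_sort A).pairwise, ?_, ?_⟩
    · refine List.pairwise_cons.2 ⟨?_, ?_⟩
      · intro y hy
        obtain ⟨z, hz, rfl⟩ := List.mem_map.1 hy
        have := hB z (Finset.mem_sort (α := ℕ) (· ≤ ·) |>.1 hz)
        omega
      · exact (Finset.sortedLT_sort B).pairwise.map _ (fun h => by omega)
    · intro x hx y hy
      have hxa := (hA x ((Finset.mem_sort (α := ℕ) (· ≤ ·)).1 hx)).2
      rcases List.mem_cons.1 hy with rfl | hy
      · exact hxa
      · obtain ⟨z, hz, rfl⟩ := List.mem_map.1 hy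
        have := hB z (Finset.mem_sort (α := ℕ) (· ≤ ·) |>.1 hz)
        omega
  · ext y
    simp [List.mem_toFinset, Finset.mem_union, Finset.mem_image, Finset.mem_sort,
      List.mem_map, or_assoc, eq_comm]

lemma sort_union_shift' {a : ℕ} (A B : Finset ℕ)
    (hA : ∀ x ∈ A, 0 < x ∧ x < a) (hB : ∀ x ∈ B, 0 < x) :
    (A ∪ B.image (· + a)).sort (· ≤ ·)
      = A.sort (· ≤ ·) ++ (B.sort (· ≤ ·)).map (· + a) := by
  apply sort_eq_of_sorted
  · rw [List.pairwise_append]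
    refine ⟨(Finset.sortedLT_sort A).pairwise, (Finset.sortedLT_sort B).pairwise.map _ (fun h => by omega), ?_⟩
    · intro x hx y hy
      have hxa := (hA x ((Finset.mem_sort (α := ℕ) (· ≤ ·)).1 hx)).2
      obtain ⟨z, hz, rfl⟩ := List.mem_map.1 hy
      have := hB z (Finset.mem_sort (α := ℕ) (· ≤ ·) |>.1 hz)
      omega
  · ext y
    simp [List.mem_toFinset, Finset.mem_union, Finset.mem_image, Finset.mem_sort,
      List.mem_map, eq_comm]

lemma dfrom_map_add0 (a : ℕ) (m : List ℕ) : dfrom a (m.map (· + a)) = dfrom 0 m := by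
  have := dfrom_map_add 0 a m
  rwa [Nat.zero_add] at this

lemma filter_big {a b : ℕ} (ha : a ≠ 0) (hb : b ≠ 0) {A B : Finset ℕ}
    (hA : ∀ x ∈ A, 0 < x ∧ x < a) (hB : ∀ x ∈ B, 0 < x ∧ x < b) :
    (A ∪ {a} ∪ B.image (· + a)).filter (fun x => 0 < x ∧ x < a + b)
      = A ∪ {a} ∪ B.image (· + a) := by
  apply Finset.filter_eq_self.mpr
  intro x hx
  rcases Finset.mem_union.1 hx with hx | hx
  · rcases Finset.mem_union.1 hx with hx | hx
    · have := hA x hx; omega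
    · simp at hx; omega
  · obtain ⟨z, hz, rfl⟩ := Finset.mem_image.1 hx
    have := hB z hz; omega

lemma filter_big' {a b : ℕ} (ha : a ≠ 0) (hb : b ≠ 0) {A B : Finset ℕ}
    (hA : ∀ x ∈ A, 0 < x ∧ x < a) (hB : ∀ x ∈ B, 0 < x ∧ x < b) :
    (A ∪ B.image (· + a)).filter (fun x => 0 < x ∧ x < a + b)
      = A ∪ B.image (· + a) := by
  apply Finset.filter_eq_self.mpr
  intro x hx
  rcases Finset.mem_union.1 hx with hx | hx
  · have := hA x hx; omega
  · obtain ⟨z, hz, rfl⟩ := Finset.mem_image.1 hx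
    have := hB z hz; omega

lemma append_fromDescents {a b : ℕ} (ha : a ≠ 0) (hb : b ≠ 0) (s t : Finset ℕ) :
    fromDescents a s ++ fromDescents b t
      = fromDescents (a + b) ((s.filter (fun x => 0 < x ∧ x < a)) ∪ {a}
          ∪ ((t.filter (fun x => 0 < x ∧ x < b)).image (· + a))) := by
  set A := s.filter (fun x => 0 < x ∧ x < a) with hAdef
  set B := t.filter (fun x => 0 < x ∧ x < b) with hBdef
  have hA : ∀ x ∈ A, 0 < x ∧ x < a := fun x hx => (Finset.mem_filter.1 hx).2
  have hB : ∀ x ∈ B, 0 < x ∧ x < b := fun x hx => (Finset.mem_filter.1 hx).2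
  have hab : a + b ≠ 0 := by omega
  rw [fromDescents_eq_dfrom ha, fromDescents_eq_dfrom hb, fromDescents_eq_dfrom hab,
    ← hAdef, ← hBdef, filter_big ha hb hA hB,
    sort_union_shift A B hA (fun x hx => (hB x hx).1)]
  have hmap : ((B.sort (· ≤ ·)) ++ [b]).map (· + a)
      = (B.sort (· ≤ ·)).map (· + a) ++ [a + b] := by simp [Nat.add_comm]
  calc dfrom 0 (A.sort (· ≤ ·) ++ [a]) ++ dfrom 0 (B.sort (· ≤ ·) ++ [b])
      = dfrom 0 (A.sort (· ≤ ·) ++ [a])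
          ++ dfrom ((A.sort (· ≤ ·) ++ [a]).getLastD 0)
            (((B.sort (· ≤ ·) ++ [b])).map (· + a)) := by
        rw [List.getLastD_concat, dfrom_map_add0]
    _ = dfrom 0 ((A.sort (· ≤ ·) ++ [a]) ++ ((B.sort (· ≤ ·) ++ [b])).map (· + a)) :=
        (dfrom_append _ _ _).symm
    _ = dfrom 0 ((A.sort (· ≤ ·) ++ a :: (B.sort (· ≤ ·)).map (· + a)) ++ [a + b]) := by
        rw [hmap]; simp

lemma nearConcat_fromDescents {a b : ℕ} (ha : a ≠ 0) (hb : b ≠ 0) (s t : Finset ℕ) :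
    nearConcat (fromDescents a s) (fromDescents b t)
      = fromDescents (a + b) ((s.filter (fun x => 0 < x ∧ x < a))
          ∪ ((t.filter (fun x => 0 < x ∧ x < b)).image (· + a))) := by
  set A := s.filter (fun x => 0 < x ∧ x < a) with hAdef
  set B := t.filter (fun x => 0 < x ∧ x < b) with hBdef
  have hA : ∀ x ∈ A, 0 < x ∧ x < a := fun x hx => (Finset.mem_filter.1 hx).2
  have hB : ∀ x ∈ B, 0 < x ∧ x < b := fun x hx => (Finset.mem_filter.1 hx).2
  have hab : a + b ≠ 0 := by omega
  obtain ⟨h0, T, hT⟩ : ∃ h0 T, B.sort (· ≤ ·) ++ [b] = h0 :: T := by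
    cases hBs : B.sort (· ≤ ·) with
    | nil => exact ⟨b, [], rfl⟩
    | cons y ys => exact ⟨y, ys ++ [b], rfl⟩
  set c : ℕ := (A.sort (· ≤ ·)).getLastD 0 with hc
  have hca : c ≤ a := by
    apply getLastD_le (by omega)
    intro x hx
    exact le_of_lt (hA x ((Finset.mem_sort (α := ℕ) (· ≤ ·)).1 hx)).2
  rw [fromDescents_eq_dfrom ha, fromDescents_eq_dfrom hb, fromDescents_eq_dfrom hab,
    ← hAdef, ← hBdef, filter_big' ha hb hA hB,
    sort_union_shift' A B hA (fun x hx => (hB x hx).1)]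
  rw [dfrom_append 0 (A.sort (· ≤ ·)) [a], hT]
  have hδ : dfrom 0 (h0 :: T) = h0 :: dfrom h0 T := by simp [dfrom]
  have hγ : dfrom c [a] = [a - c] := rfl
  rw [hδ, hγ, nearConcat_eq]
  have hmap : ((B.sort (· ≤ ·)) ++ [b]).map (· + a)
      = (B.sort (· ≤ ·)).map (· + a) ++ [a + b] := by simp [Nat.add_comm]
  have : (A.sort (· ≤ ·) ++ (B.sort (· ≤ ·)).map (· + a)) ++ [a + b]
      = A.sort (· ≤ ·) ++ ((h0 + a) :: T.map (· + a)) := by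
    rw [List.append_assoc, ← hmap, hT]; simp
  rw [this, dfrom_append 0 (A.sort (· ≤ ·)) ((h0 + a) :: T.map (· + a)), ← hc]
  have : dfrom c ((h0 + a) :: T.map (· + a)) = (h0 + a - c) :: dfrom h0 T := by
    show (h0 + a - c) :: dfrom (h0 + a) (T.map (· + a)) = _
    rw [dfrom_map_add]
  rw [this]
  congr 2
  omega

lemma image_sub_filter {i n : ℕ} (hin : i < n) (D : Finset ℕ) :
    ((D.image (fun d => d - i)).filter (fun x => 0 < x ∧ x < n - i)).image (· + i)
      = D.filter (fun x => i < x ∧ x < n) := by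
  ext x
  simp only [Finset.mem_image, Finset.mem_filter]
  constructor
  · rintro ⟨d, ⟨⟨e, he, rfl⟩, hd1, hd2⟩, rfl⟩
    have hei : e - i + i = e := by omega
    rw [hei]
    exact ⟨he, by omega, by omega⟩
  · rintro ⟨hx, hx1, hx2⟩
    exact ⟨x - i, ⟨⟨x, hx, rfl⟩, by omega, by omega⟩, by omega⟩

lemma image_sub_compl {i n : ℕ} (hin : i < n) (D : Finset ℕ) :
    (((Finset.Icc 1 (n - i - 1)) \ (D.image (fun d => d - i))).filter
        (fun x => 0 < x ∧ x < n - i)).image (· + i)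
      = Finset.Ico (i + 1) n \ D := by
  ext x
  simp only [Finset.mem_image, Finset.mem_filter, Finset.mem_sdiff, Finset.mem_Icc,
    Finset.mem_Ico]
  constructor
  · rintro ⟨d, ⟨⟨⟨hd1, hd2⟩, hdni⟩, h0, hdn⟩, rfl⟩
    refine ⟨⟨by omega, by omega⟩, fun hxD => hdni ⟨d + i, hxD, by omega⟩⟩
  · rintro ⟨⟨hx1, hx2⟩, hxD⟩
    refine ⟨x - i, ⟨⟨⟨by omega, by omega⟩, ?_⟩, by omega, by omega⟩, by omega⟩
    rintro ⟨e, he, hei⟩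
    have : e = x := by omega
    exact hxD (this ▸ he)

def Uc (D : Finset ℕ) (n i : ℕ) : Finset ℕ :=
  (Finset.Ico 1 i \ D) ∪ (D ∩ Finset.Ico i n)

def Uc' (D : Finset ℕ) (n i : ℕ) : Finset ℕ :=
  (D ∩ Finset.Ico 1 i) ∪ (Finset.Ico i n \ D)

lemma key_mid (D : Finset ℕ) {n i : ℕ} (h1 : i ≠ 0) (h2 : i < n) :
    hatMul (complComp (fromDescents i D)) (fromDescents (n - i) (D.image (fun d => d - i)))
      = Finsupp.single (fromDescents n (Uc D n i)) 1
        + Finsupp.single (fromDescents n (Uc D n (i+1))) 1 := by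
  have hni : n - i ≠ 0 := by omega
  rw [complComp_fromDescents h1]
  rw [hatMul, if_neg (by push_neg; exact ⟨fromDescents_ne_nil h1 _, fromDescents_ne_nil hni _⟩)]
  rw [append_fromDescents h1 hni, nearConcat_fromDescents h1 hni]
  have hin : i + (n - i) = n := by omega
  rw [hin, image_sub_filter h2 D]
  by_cases hiD : i ∈ D
  · have e1 : fromDescents n ((Finset.Icc 1 (i-1) \ D).filter (fun x => 0 < x ∧ x < i) ∪ {i}
        ∪ D.filter (fun x => i < x ∧ x < n)) = fromDescents n (Uc D n i) := by
      apply fromDescents_congr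
      ext x
      by_cases hx : x ∈ D <;> by_cases hxi : x = i <;>
        simp_all [Uc, Finset.mem_filter, Finset.mem_union, Finset.mem_sdiff, Finset.mem_Icc,
          Finset.mem_Ico, Finset.mem_inter, Finset.mem_singleton] <;> omega
    have e2 : fromDescents n ((Finset.Icc 1 (i-1) \ D).filter (fun x => 0 < x ∧ x < i)
        ∪ D.filter (fun x => i < x ∧ x < n)) = fromDescents n (Uc D n (i+1)) := by
      apply fromDescents_congr
      ext x
      by_cases hx : x ∈ D <;> by_cases hxi : x = i <;>
        simp_all [Uc, Finset.mem_filter, Finset.mem_union, Finset.mem_sdiff, Finset.mem_Icc,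
          Finset.mem_Ico, Finset.mem_inter, Finset.mem_singleton] <;> omega
    rw [e1, e2]
  · have e1 : fromDescents n ((Finset.Icc 1 (i-1) \ D).filter (fun x => 0 < x ∧ x < i) ∪ {i}
        ∪ D.filter (fun x => i < x ∧ x < n)) = fromDescents n (Uc D n (i+1)) := by
      apply fromDescents_congr
      ext x
      by_cases hx : x ∈ D <;> by_cases hxi : x = i <;>
        simp_all [Uc, Finset.mem_filter, Finset.mem_union, Finset.mem_sdiff, Finset.mem_Icc,
          Finset.mem_Ico, Finset.mem_inter, Finset.mem_singleton] <;> omega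
    have e2 : fromDescents n ((Finset.Icc 1 (i-1) \ D).filter (fun x => 0 < x ∧ x < i)
        ∪ D.filter (fun x => i < x ∧ x < n)) = fromDescents n (Uc D n i) := by
      apply fromDescents_congr
      ext x
      by_cases hx : x ∈ D <;> by_cases hxi : x = i <;>
        simp_all [Uc, Finset.mem_filter, Finset.mem_union, Finset.mem_sdiff, Finset.mem_Icc,
          Finset.mem_Ico, Finset.mem_inter, Finset.mem_singleton] <;> omega
    rw [e1, e2, add_comm]

lemma key_mid' (D : Finset ℕ) {n i : ℕ} (h1 : i ≠ 0) (h2 : i < n) :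
    hatMul (fromDescents i D) (complComp (fromDescents (n - i) (D.image (fun d => d - i))))
      = Finsupp.single (fromDescents n (Uc' D n i)) 1
        + Finsupp.single (fromDescents n (Uc' D n (i+1))) 1 := by
  have hni : n - i ≠ 0 := by omega
  rw [complComp_fromDescents hni]
  rw [hatMul, if_neg (by push_neg; exact ⟨fromDescents_ne_nil h1 _, fromDescents_ne_nil hni _⟩)]
  rw [append_fromDescents h1 hni, nearConcat_fromDescents h1 hni]
  have hin : i + (n - i) = n := by omega
  rw [hin, image_sub_compl h2 D]
  by_cases hiD : i ∈ D
  · have e1 : fromDescents n (D.filter (fun x => 0 < x ∧ x < i) ∪ {i}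
        ∪ (Finset.Ico (i+1) n \ D)) = fromDescents n (Uc' D n (i+1)) := by
      apply fromDescents_congr
      ext x
      by_cases hx : x ∈ D <;> by_cases hxi : x = i <;>
        simp_all [Uc', Finset.mem_filter, Finset.mem_union, Finset.mem_sdiff, Finset.mem_Icc,
          Finset.mem_Ico, Finset.mem_inter, Finset.mem_singleton] <;> omega
    have e2 : fromDescents n (D.filter (fun x => 0 < x ∧ x < i)
        ∪ (Finset.Ico (i+1) n \ D)) = fromDescents n (Uc' D n i) := by
      apply fromDescents_congr
      ext x
      by_cases hx : x ∈ D <;> by_cases hxi : x = i <;>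
        simp_all [Uc', Finset.mem_filter, Finset.mem_union, Finset.mem_sdiff, Finset.mem_Icc,
          Finset.mem_Ico, Finset.mem_inter, Finset.mem_singleton] <;> omega
    rw [e1, e2, add_comm]
  · have e1 : fromDescents n (D.filter (fun x => 0 < x ∧ x < i) ∪ {i}
        ∪ (Finset.Ico (i+1) n \ D)) = fromDescents n (Uc' D n i) := by
      apply fromDescents_congr
      ext x
      by_cases hx : x ∈ D <;> by_cases hxi : x = i <;>
        simp_all [Uc', Finset.mem_filter, Finset.mem_union, Finset.mem_sdiff, Finset.mem_Icc,
          Finset.mem_Ico, Finset.mem_inter, Finset.mem_singleton] <;> omega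
    have e2 : fromDescents n (D.filter (fun x => 0 < x ∧ x < i)
        ∪ (Finset.Ico (i+1) n \ D)) = fromDescents n (Uc' D n (i+1)) := by
      apply fromDescents_congr
      ext x
      by_cases hx : x ∈ D <;> by_cases hxi : x = i <;>
        simp_all [Uc', Finset.mem_filter, Finset.mem_union, Finset.mem_sdiff, Finset.mem_Icc,
          Finset.mem_Ico, Finset.mem_inter, Finset.mem_singleton] <;> omega
    rw [e1, e2]

lemma Uc_zero (D : Finset ℕ) (n : ℕ) : fromDescents n (Uc D n 0) = fromDescents n D := by
  apply fromDescents_congr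
  ext x
  by_cases hx : x ∈ D <;>
    simp_all [Uc, Finset.mem_filter, Finset.mem_union, Finset.mem_sdiff,
      Finset.mem_Ico, Finset.mem_inter] <;> omega

lemma Uc_one (D : Finset ℕ) (n : ℕ) : fromDescents n (Uc D n 1) = fromDescents n D := by
  apply fromDescents_congr
  ext x
  by_cases hx : x ∈ D <;>
    simp_all [Uc, Finset.mem_filter, Finset.mem_union, Finset.mem_sdiff,
      Finset.mem_Ico, Finset.mem_inter] <;> omega

lemma Uc_top (D : Finset ℕ) (n : ℕ) :
    fromDescents n (Uc D n n) = fromDescents n (Finset.Icc 1 (n-1) \ D) := by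
  apply fromDescents_congr
  ext x
  by_cases hx : x ∈ D <;>
    simp_all [Uc, Finset.mem_filter, Finset.mem_union, Finset.mem_sdiff,
      Finset.mem_Ico, Finset.mem_Icc, Finset.mem_inter] <;> omega

lemma Uc'_zero (D : Finset ℕ) (n : ℕ) :
    fromDescents n (Uc' D n 0) = fromDescents n (Finset.Icc 1 (n-1) \ D) := by
  apply fromDescents_congr
  ext x
  by_cases hx : x ∈ D <;>
    simp_all [Uc', Finset.mem_filter, Finset.mem_union, Finset.mem_sdiff,
      Finset.mem_Ico, Finset.mem_Icc, Finset.mem_inter] <;> omega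

lemma Uc'_one (D : Finset ℕ) (n : ℕ) :
    fromDescents n (Uc' D n 1) = fromDescents n (Finset.Icc 1 (n-1) \ D) := by
  apply fromDescents_congr
  ext x
  by_cases hx : x ∈ D <;>
    simp_all [Uc', Finset.mem_filter, Finset.mem_union, Finset.mem_sdiff,
      Finset.mem_Ico, Finset.mem_Icc, Finset.mem_inter] <;> omega

lemma Uc'_top (D : Finset ℕ) (n : ℕ) : fromDescents n (Uc' D n n) = fromDescents n D := by
  apply fromDescents_congr
  ext x
  by_cases hx : x ∈ D <;>
    simp_all [Uc', Finset.mem_filter, Finset.mem_union, Finset.mem_sdiff,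
      Finset.mem_Ico, Finset.mem_inter] <;> omega

noncomputable def hfun (D : Finset ℕ) (n i : ℕ) : List ℕ →₀ ℤ :=
  ((-1:ℤ)^i) • Finsupp.single (fromDescents n (Uc D n i)) 1

noncomputable def hfun' (D : Finset ℕ) (n i : ℕ) : List ℕ →₀ ℤ :=
  ((-1:ℤ)^(n-i)) • Finsupp.single (fromDescents n (Uc' D n i)) 1

lemma mid_tele (D : Finset ℕ) {n i : ℕ} (h1 : i ≠ 0) (h2 : i < n) :
    ((-1:ℤ)^i) • hatMul (complComp (fromDescents i D))
        (fromDescents (n - i) (D.image (fun d => d - i)))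
      = hfun D n i - hfun D n (i+1) := by
  rw [key_mid D h1 h2, hfun, hfun, smul_add, pow_succ]
  module

lemma mid_tele' (D : Finset ℕ) {n i : ℕ} (h1 : i ≠ 0) (h2 : i < n) :
    ((-1:ℤ)^(n-i)) • hatMul (fromDescents i D)
        (complComp (fromDescents (n - i) (D.image (fun d => d - i))))
      = hfun' D n i - hfun' D n (i+1) := by
  rw [key_mid' D h1 h2, hfun', hfun', smul_add]
  have he : n - i = (n - (i+1)) + 1 := by omega
  rw [he, pow_succ]
  module

lemma key_zero (D : Finset ℕ) (n : ℕ) :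
    hatMul (complComp (fromDescents 0 D)) (fromDescents (n - 0) (D.image (fun d => d - 0)))
      = Finsupp.single (fromDescents n (Uc D n 0)) 1 := by
  have h1 : fromDescents 0 D = [] := rfl
  have h2 : complComp ([] : List ℕ) = [] := rfl
  have h3 : D.image (fun d => d - 0) = D := by simp
  rw [h1, h2, hatMul, if_pos (Or.inl rfl), List.nil_append, Nat.sub_zero, Uc_zero, h3]

lemma key_top (D : Finset ℕ) {n : ℕ} (hn : n ≠ 0) :
    hatMul (complComp (fromDescents n D)) (fromDescents (n - n) (D.image (fun d => d - n)))
      = Finsupp.single (fromDescents n (Uc D n n)) 1 := by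
  have h1 : fromDescents (n - n) (D.image (fun d => d - n)) = [] := by
    rw [Nat.sub_self]; rfl
  rw [h1, hatMul, if_pos (Or.inr rfl), List.append_nil, complComp_fromDescents hn, Uc_top]

lemma key_zero' (D : Finset ℕ) {n : ℕ} (hn : n ≠ 0) :
    hatMul (fromDescents 0 D) (complComp (fromDescents (n - 0) (D.image (fun d => d - 0))))
      = Finsupp.single (fromDescents n (Uc' D n 0)) 1 := by
  have h1 : fromDescents 0 D = [] := rfl
  have h3 : D.image (fun d => d - 0) = D := by simp
  rw [h1, hatMul, if_pos (Or.inl rfl), List.nil_append, Nat.sub_zero, h3,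
    complComp_fromDescents hn, Uc'_zero]

lemma key_top' (D : Finset ℕ) (n : ℕ) :
    hatMul (fromDescents n D) (complComp (fromDescents (n - n) (D.image (fun d => d - n))))
      = Finsupp.single (fromDescents n (Uc' D n n)) 1 := by
  have h1 : fromDescents (n - n) (D.image (fun d => d - n)) = [] := by
    rw [Nat.sub_self]; rfl
  have h2 : complComp ([] : List ℕ) = [] := rfl
  rw [h1, h2, hatMul, if_pos (Or.inr rfl), List.append_nil, Uc'_top]

lemma sum_left (D : Finset ℕ) {n : ℕ} (hn : n ≠ 0) :
    ∑ i ∈ Finset.range (n + 1),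
        ((-1:ℤ)^i) • hatMul (complComp (fromDescents i D))
          (fromDescents (n - i) (D.image (fun d => d - i))) = 0 := by
  obtain ⟨m, rfl⟩ : ∃ m, n = m + 1 := ⟨n - 1, by omega⟩
  rw [Finset.sum_range_succ', Finset.sum_range_succ]
  have hmid : ∀ i ∈ Finset.range m,
      ((-1:ℤ)^(i+1)) • hatMul (complComp (fromDescents (i+1) D))
          (fromDescents (m + 1 - (i+1)) (D.image (fun d => d - (i+1))))
        = hfun D (m+1) (i+1) - hfun D (m+1) (i+1+1) := by
    intro i hi
    rw [Finset.mem_range] at hi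
    exact mid_tele D (by omega) (by omega)
  rw [Finset.sum_congr rfl hmid, Finset.sum_range_sub' (fun i => hfun D (m+1) (i+1)) m]
  rw [key_top D hn, key_zero D]
  have h1 : hfun D (m+1) 1 = - Finsupp.single (fromDescents (m+1) (Uc D (m+1) 0)) 1 := by
    rw [hfun, pow_one, Uc_one, ← Uc_zero, neg_one_smul]
  have h2 : ((-1:ℤ)^(m+1)) • Finsupp.single (fromDescents (m+1) (Uc D (m+1) (m+1))) (1:ℤ)
      = hfun D (m+1) (m+1) := rfl
  rw [h2, h1]
  simp only [pow_zero, one_smul]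
  abel

lemma sum_right (D : Finset ℕ) {n : ℕ} (hn : n ≠ 0) :
    ∑ i ∈ Finset.range (n + 1),
        ((-1:ℤ)^(n - i)) • hatMul (fromDescents i D)
          (complComp (fromDescents (n - i) (D.image (fun d => d - i)))) = 0 := by
  obtain ⟨m, rfl⟩ : ∃ m, n = m + 1 := ⟨n - 1, by omega⟩
  rw [Finset.sum_range_succ', Finset.sum_range_succ]
  have hmid : ∀ i ∈ Finset.range m,
      ((-1:ℤ)^(m + 1 - (i+1))) • hatMul (fromDescents (i+1) D)
          (complComp (fromDescents (m + 1 - (i+1)) (D.image (fun d => d - (i+1)))))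
        = hfun' D (m+1) (i+1) - hfun' D (m+1) (i+1+1) := by
    intro i hi
    rw [Finset.mem_range] at hi
    exact mid_tele' D (by omega) (by omega)
  rw [Finset.sum_congr rfl hmid, Finset.sum_range_sub' (fun i => hfun' D (m+1) (i+1)) m]
  rw [key_top' D, key_zero' D hn]
  have h1 : hfun' D (m+1) 1 = - (((-1:ℤ)^(m + 1 - 0)) •
      Finsupp.single (fromDescents (m+1) (Uc' D (m+1) 0)) 1) := by
    rw [hfun', Uc'_one, ← Uc'_zero]
    have he : m + 1 - 0 = (m + 1 - 1) + 1 := by omega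
    rw [he, pow_succ]
    module
  have h2 : ((-1:ℤ)^(m + 1 - (m+1))) • Finsupp.single (fromDescents (m+1) (Uc' D (m+1) (m+1))) (1:ℤ)
      = hfun' D (m+1) (m+1) := rfl
  rw [h2, h1]
  abel

/-- The map `S(α) = (−1)^{|α|} α^c` is a two-sided antipode for the algebra and
coalgebra `Comp`:  `Σ_{i=0}^{n} S(α_{≤i}) ⊗̂ α_{>i} = u∘ε(α) = Σ_{i=0}^{n} α_{≤i} ⊗̂ S(α_{>i})`
for every composition `α` of `n`. -/
theorem comp_antipode (α : List ℕ) (hα : ∀ x ∈ α, 0 < x) :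
    (∑ i ∈ Finset.range (α.sum + 1),
        ((-1 : ℤ) ^ i) • hatMul (complComp (restrLe α i)) (restrGt α i)
      = if α = [] then Finsupp.single ([] : List ℕ) (1 : ℤ) else 0) ∧
    (∑ i ∈ Finset.range (α.sum + 1),
        ((-1 : ℤ) ^ (α.sum - i)) • hatMul (restrLe α i) (complComp (restrGt α i))
      = if α = [] then Finsupp.single ([] : List ℕ) (1 : ℤ) else 0) := by
  by_cases hαe : α = []
  · subst hαe
    constructor <;>
      simp [Finset.sum_range_one, restrLe, restrGt, complComp, fromDescents, hatMul, descents]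
  · have hn0 : α.sum ≠ 0 := by
      cases α with
      | nil => exact absurd rfl hαe
      | cons x r =>
        have := hα x (by simp)
        simp only [List.sum_cons]
        omega
    refine ⟨?_, ?_⟩
    · rw [if_neg hαe]
      exact sum_left (descents α) hn0
    · rw [if_neg hαe]
      exact sum_right (descents α) hn0
end
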